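/- arXiv:2206.12526 — 19 statements merged into one kernel-verified Lean document; each statement's English description precedes it below -/
import Mathlib

section
/- Let X be a set and Y a nonempty subset of X. The semigroup T(X,Y) (all maps X → X with range contained in Y, under the multiplication α·β := β ∘ α, i.e. first apply α then β) possesses a two-sided identity element (is a monoid) if and only if Y = X or Y is a singleton. -/
/-- Let `X` be a set and `Y` a nonempty subset of `X`. The semigroup
`T(X,Y)` of all maps `X → X` with range contained in `Y`, under the multiplication
`α·β := β ∘ α`, possesses a two-sided identity element (is a monoid) if and only if
`Y = X` or `Y` is a singleton. -/
theorem TXY_monoid_iff {X : Type*} (Y : Set X) (hY : Y.Nonempty) :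
    (∃ ε : X → X, Set.range ε ⊆ Y ∧
      ∀ α : X → X, Set.range α ⊆ Y → α ∘ ε = α ∧ ε ∘ α = α) ↔
    Y = Set.univ ∨ ∃ y : X, Y = {y} := by
  classical
  constructor
  · rintro ⟨ε, hran, hid⟩
    by_cases hsub : ∃ y : X, Y = {y}
    · exact Or.inr hsub
    · left
      -- Y has two distinct elements
      obtain ⟨a, ha⟩ := hY
      have hb : ∃ b ∈ Y, b ≠ a := by
        by_contra h
        push_neg at h
        exact hsub ⟨a, Set.eq_singleton_iff_unique_mem.mpr ⟨ha, h⟩⟩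
      obtain ⟨b, hb, hba⟩ := hb
      have hεid : ε = id := by
        funext x
        by_contra hne
        set α : X → X := fun z => if z = x then a else b with hα
        have hranα : Set.range α ⊆ Y := by
          rintro _ ⟨z, rfl⟩
          simp only [hα]
          split <;> assumption
        have := congrFun (hid α hranα).1 x
        simp only [Function.comp_apply, hα, if_pos rfl] at this
        rw [if_neg (by simpa [eq_comm] using hne)] at this
        exact hba this
      rw [hεid] at hran
      ext x
      simp only [Set.mem_univ, iff_true]
      exact hran ⟨x, rfl⟩
  · rintro (rfl | ⟨y, rfl⟩)
    · exact ⟨id, by simp, fun α _ => ⟨rfl, rfl⟩⟩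
    · refine ⟨fun _ => y, by simp, fun α hα => ⟨?_, ?_⟩⟩
      · funext x
        have h1 : α y = y := hα ⟨y, rfl⟩
        have h2 : α x = y := hα ⟨x, rfl⟩
        simp [Function.comp, h1, h2]
      · funext x
        have h2 : α x = y := hα ⟨x, rfl⟩
        simp [Function.comp, h2]
end

section
/- Let X be a set and Y a nonempty subset of X. There exists a set Z such that the semigroup T(X,Y) is isomorphic (as a semigroup) to the full transformation monoid of all maps Z → Z (under α·β := β ∘ α) if and only if Y = X or Y is a singleton. -/
universe u

/-- The semigroup `T(X,Y)` of all maps `X → X` with range contained in `Y`. -/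
def TXY {X : Type u} (Y : Set X) : Type u := {α : X → X // Set.range α ⊆ Y}

/-- Multiplication on `T(X,Y)`: `α·β := β ∘ α` (first apply `α`, then `β`). -/
def Tmul {X : Type u} {Y : Set X} (a b : TXY Y) : TXY Y :=
  ⟨b.1 ∘ a.1, (Set.range_comp_subset_range a.1 b.1).trans b.2⟩

/-- Let `X` be a set and `Y` a nonempty subset of `X`. There exists a set
`Z` such that `T(X,Y)` is isomorphic as a semigroup to the full transformation monoid of
all maps `Z → Z` (under `α·β := β ∘ α`) if and only if `Y = X` or `Y` is a singleton. -/
theorem TXY_iso_full_transformation_iff {X : Type u} (Y : Set X) (hY : Y.Nonempty) :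
    (∃ (Z : Type u) (φ : TXY Y ≃ (Z → Z)),
      ∀ a b : TXY Y, φ (Tmul a b) = φ b ∘ φ a) ↔
    Y = Set.univ ∨ ∃ y : X, Y = {y} := by
  constructor
  · rintro ⟨Z, φ, hφ⟩
    by_contra h
    push_neg at h
    obtain ⟨hU, hS⟩ := h
    -- get x ∉ Y
    have hx : ∃ x, x ∉ Y := by
      by_contra hc
      push_neg at hc
      exact hU (Set.eq_univ_of_forall hc)
    obtain ⟨x, hxY⟩ := hx
    -- get two distinct elements of Y
    obtain ⟨y₁, hy₁⟩ := hY
    have hy2 : ∃ y₂ ∈ Y, y₂ ≠ y₁ := by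
      by_contra hc
      push_neg at hc
      exact hS y₁ (Set.eq_singleton_iff_unique_mem.mpr ⟨hy₁, hc⟩)
    obtain ⟨y₂, hy₂, hne⟩ := hy2
    -- identity element
    set e : TXY Y := φ.symm id with he
    have hea : ∀ a : TXY Y, Tmul e a = a := by
      intro a
      apply φ.injective
      rw [hφ]
      simp [he]
    -- the map a sending x ↦ y₁, else y₂
    classical
    have hr : Set.range (fun z => if z = x then y₁ else y₂) ⊆ Y := by
      rintro _ ⟨z, rfl⟩
      by_cases hz : z = x <;> simp [hz, hy₁, hy₂]
    set a : TXY Y := ⟨fun z => if z = x then y₁ else y₂, hr⟩ with ha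
    have := hea a
    have hcomp : a.1 (e.1 x) = a.1 x := congrFun (congrArg Subtype.val this) x
    have hex : e.1 x ∈ Y := e.2 ⟨x, rfl⟩
    have hexne : e.1 x ≠ x := fun h => hxY (h ▸ hex)
    simp [ha, hexne] at hcomp
    exact hne hcomp
  · rintro (rfl | ⟨y, rfl⟩)
    · refine ⟨X, ⟨fun a => a.1, fun f => ⟨f, by simp⟩, fun a => rfl, fun f => rfl⟩, fun a b => rfl⟩
    · refine ⟨PUnit, ⟨fun _ _ => PUnit.unit, fun _ => ⟨fun _ => y, by simp [Set.range_subset_iff]⟩,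
        fun a => Subtype.ext (funext fun z => (a.2 ⟨z, rfl⟩).symm), fun f => funext fun _ => rfl⟩,
        fun a b => rfl⟩
end

section
/- Let X be a set and Y a nonempty subset of X, and let Q = {α ∈ T(X,Y) : α(X) ⊆ α(Y)}. Then: (1) Q is a right ideal of T(X,Y), i.e. for all α ∈ Q and β ∈ T(X,Y), α·β ∈ Q; (2) every element of Q is regular in T(X,Y), i.e. for each α ∈ Q there exists γ ∈ T(X,Y) with α = α·γ·α; and (3) every regular element of T(X,Y) lies in Q. Hence Q is exactly the set of regular elements of T(X,Y). -/
/-- Let `X` be a set, `Y` a nonempty subset of `X`, and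
`Q = {α ∈ T(X,Y) : α(X) ⊆ α(Y)}`.  Then (1) `Q` is a right ideal of `T(X,Y)`
(multiplication `α·β := β ∘ α`); (2) every element of `Q` is regular in `T(X,Y)`;
(3) every regular element of `T(X,Y)` lies in `Q`. -/
theorem Q_right_ideal_and_regular {X : Type*} (Y : Set X) (hY : Y.Nonempty) :
    (∀ α : X → X, Set.range α ⊆ Y → Set.range α ⊆ α '' Y →
      ∀ β : X → X, Set.range β ⊆ Y →
        Set.range (β ∘ α) ⊆ Y ∧ Set.range (β ∘ α) ⊆ (β ∘ α) '' Y) ∧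
    (∀ α : X → X, Set.range α ⊆ Y → Set.range α ⊆ α '' Y →
      ∃ γ : X → X, Set.range γ ⊆ Y ∧ α ∘ γ ∘ α = α) ∧
    (∀ α : X → X, Set.range α ⊆ Y →
      (∃ γ : X → X, Set.range γ ⊆ Y ∧ α ∘ γ ∘ α = α) → Set.range α ⊆ α '' Y) := by
  classical
  obtain ⟨y₀, hy₀⟩ := hY
  refine ⟨?_, ?_, ?_⟩
  · intro α hα hαQ β hβ
    constructor
    · rintro _ ⟨x, rfl⟩
      exact hβ ⟨α x, rfl⟩
    · rintro _ ⟨x, rfl⟩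
      obtain ⟨y, hy, hyx⟩ := hαQ ⟨x, rfl⟩
      exact ⟨y, hy, by simp [Function.comp, hyx]⟩
  · intro α hα hαQ
    refine ⟨fun z => if h : ∃ y ∈ Y, α y = z then h.choose else y₀, ?_, ?_⟩
    · rintro _ ⟨z, rfl⟩
      by_cases h : ∃ y ∈ Y, α y = z
      · simpa [h] using h.choose_spec.1
      · simpa [h] using hy₀
    · funext x
      have h : ∃ y ∈ Y, α y = α x := by
        obtain ⟨y, hy, hyx⟩ := hαQ ⟨x, rfl⟩
        exact ⟨y, hy, hyx⟩
      simp only [Function.comp, dif_pos h]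
      exact h.choose_spec.2
  · rintro α hα ⟨γ, hγ, hreg⟩ _ ⟨x, rfl⟩
    refine ⟨γ (α x), hγ ⟨α x, rfl⟩, ?_⟩
    exact congrFun hreg x
end

section
/- Let X be a set and Y a nonempty proper subset of X (Y ⊊ X). Then the semigroup T(X,Y) is not a regular semigroup if and only if Y contains at least two elements. -/
/-- Let `X` be a set and `Y` a nonempty proper subset of `X`. Then the
semigroup `T(X,Y)` (maps `X → X` with range in `Y`, multiplication `α·β := β ∘ α`) is not
regular if and only if `Y` contains at least two elements. -/
theorem TXY_not_regular_iff {X : Type*} (Y : Set X) (hY : Y.Nonempty)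
    (hYX : Y ≠ Set.univ) :
    (¬ ∀ α : X → X, Set.range α ⊆ Y →
        ∃ γ : X → X, Set.range γ ⊆ Y ∧ α ∘ γ ∘ α = α) ↔
    Y.Nontrivial := by
  classical
  constructor
  · -- contrapositive: if Y is a singleton, everything is regular
    intro hreg
    by_contra hnt
    obtain ⟨a, ha⟩ := hY
    have hsub : Y ⊆ {a} := by
      intro y hy
      by_contra hne
      exact hnt ⟨y, hy, a, ha, hne⟩
    apply hreg
    intro α hα
    refine ⟨fun _ => a, by simp [Set.range_subset_iff, ha], ?_⟩
    funext x
    have h1 : α x = a := hsub (hα ⟨x, rfl⟩)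
    have h2 : α a = a := hsub (hα ⟨a, rfl⟩)
    simp [Function.comp, h1, h2]
  · rintro ⟨a, ha, b, hb, hab⟩ hreg
    obtain ⟨x₀, hx₀⟩ : ∃ x, x ∉ Y := by
      by_contra h
      push_neg at h
      exact hYX (Set.eq_univ_of_forall h)
    set α : X → X := fun x => if x = x₀ then a else b with hαdef
    have hα : Set.range α ⊆ Y := by
      rintro _ ⟨x, rfl⟩
      by_cases hx : x = x₀ <;> simp [hαdef, hx, ha, hb]
    obtain ⟨γ, hγ, heq⟩ := hreg α hα
    have h1 : γ (α x₀) ∈ Y := hγ ⟨α x₀, rfl⟩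
    have h2 : γ (α x₀) ≠ x₀ := fun h => hx₀ (h ▸ h1)
    have := congrFun heq x₀
    simp [hαdef, Function.comp, h2] at this
    have h2' : γ a ≠ x₀ := by simpa [hαdef] using h2
    exact hab (this h2').symm
end

section
/- Let X be a set and Y a proper subset of X with at least two elements, and let Q = {α ∈ T(X,Y) : α(X) ⊆ α(Y)}. Then: (1) for every α ∈ T(X,Y) with α ∉ Q there exists α' ∈ Q with α'(X) = α(X); and (2) for every β ∈ Q whose image β(X) has more than one element, there exists β' ∈ T(X,Y) with β' ∉ Q and β'(X) = β(X). -/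
/-- Let `X` be a set and `Y` a proper subset of `X` with at least two
elements, and `Q = {α ∈ T(X,Y) : α(X) ⊆ α(Y)}`. Then (1) for every `α ∈ T(X,Y) \ Q` there
is `α' ∈ Q` with the same image; (2) for every `β ∈ Q` whose image has more than one
element there is `β' ∈ T(X,Y) \ Q` with the same image. -/
theorem reg_nonreg_same_image {X : Type*} (Y : Set X) (hY : Y.Nontrivial)
    (hYX : Y ≠ Set.univ) :
    (∀ α : X → X, Set.range α ⊆ Y → ¬ Set.range α ⊆ α '' Y →
      ∃ α' : X → X, Set.range α' ⊆ Y ∧ Set.range α' ⊆ α' '' Y ∧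
        Set.range α' = Set.range α) ∧
    (∀ β : X → X, Set.range β ⊆ Y → Set.range β ⊆ β '' Y →
      (Set.range β).Nontrivial →
      ∃ β' : X → X, Set.range β' ⊆ Y ∧ ¬ Set.range β' ⊆ β' '' Y ∧
        Set.range β' = Set.range β) := by
  classical
  constructor
  · intro α hαY _
    refine ⟨fun x => if x ∈ Set.range α then x else α x, ?_, ?_, ?_⟩
    · rintro _ ⟨x, rfl⟩
      by_cases hx : x ∈ Set.range α
      · simpa [hx] using hαY hx
      · simpa [hx] using hαY ⟨x, rfl⟩
    · rintro _ ⟨x, rfl⟩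
      by_cases hx : x ∈ Set.range α
      · simp only [hx, if_pos]
        exact ⟨x, hαY hx, by simp [hx]⟩
      · simp only [hx, if_neg, not_false_iff]
        refine ⟨α x, hαY ⟨x, rfl⟩, ?_⟩
        simp [Set.mem_range_self x]
    · ext y
      constructor
      · rintro ⟨x, rfl⟩
        by_cases hx : x ∈ Set.range α
        · simpa [hx] using hx
        · simp [hx]
      · intro hy
        exact ⟨y, by simp [hy]⟩
  · intro β hβY hβQ hnt
    obtain ⟨a, ha, b, hb, hab⟩ := hnt
    obtain ⟨p, hp⟩ : ∃ p, p ∉ Y := by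
      by_contra h
      push_neg at h
      exact hYX (Set.eq_univ_of_forall h)
    set β' : X → X := fun x => if x = p then a else (if β x = a then b else β x)
      with hβ'
    have hβ'val : ∀ x, x ≠ p → β' x ≠ a := by
      intro x hx
      simp only [hβ', if_neg hx]
      by_cases h : β x = a <;> simp [h, hab.symm, Ne.symm hab]
    refine ⟨β', ?_, ?_, ?_⟩
    · rintro _ ⟨x, rfl⟩
      simp only [hβ']
      split_ifs with h1 h2
      · exact hβY ha
      · exact hβY hb
      · exact hβY ⟨x, rfl⟩
    · intro h
      have haR : a ∈ Set.range β' := ⟨p, by simp [hβ']⟩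
      obtain ⟨x, hxY, hx⟩ := h haR
      have hxp : x ≠ p := fun e => hp (e ▸ hxY)
      exact hβ'val x hxp hx
    · ext y
      constructor
      · rintro ⟨x, rfl⟩
        simp only [hβ']
        split_ifs with h1 h2
        · exact ha
        · exact hb
        · exact ⟨x, rfl⟩
      · intro hy
        by_cases hya : y = a
        · exact ⟨p, by simp [hβ', hya]⟩
        · obtain ⟨x, hxY, hx⟩ := hβQ hy
          have hxp : x ≠ p := fun e => hp (e ▸ hxY)
          refine ⟨x, ?_⟩
          simp [hβ', hxp, hx, hya]
end

section
/- Let X be a set and Y a nonempty subset of X. For α ∈ T(X,Y) the following are equivalent: (1) α is regular in T(X,Y), i.e. α = α·γ·α for some γ ∈ T(X,Y); (2) there exists an idempotent η ∈ T(X,Y) (η·η = η) with α = η·α and the cardinality of η(X) equal to the cardinality of α(X); (3) there exists γ ∈ T(X,Y) with α = γ·α. -/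
/-- Let `X` be a set, `Y` a nonempty subset of `X` and `α ∈ T(X,Y)`
(multiplication `α·β := β ∘ α`). The following are equivalent: (1) `α` is regular;
(2) `α = η·α` for some idempotent `η ∈ T(X,Y)` with `|η(X)| = |α(X)|`;
(3) `α = γ·α` for some `γ ∈ T(X,Y)`. -/
theorem regular_iff_left_identity {X : Type*} (Y : Set X) (hY : Y.Nonempty)
    (α : X → X) (hα : Set.range α ⊆ Y) :
    ((∃ γ : X → X, Set.range γ ⊆ Y ∧ α ∘ γ ∘ α = α) ↔
      (∃ η : X → X, Set.range η ⊆ Y ∧ η ∘ η = η ∧ α ∘ η = α ∧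
        Cardinal.mk (Set.range η) = Cardinal.mk (Set.range α))) ∧
    ((∃ γ : X → X, Set.range γ ⊆ Y ∧ α ∘ γ ∘ α = α) ↔
      (∃ γ : X → X, Set.range γ ⊆ Y ∧ α ∘ γ = α)) := by
  -- (1) ⇒ (2)
  have h12 : (∃ γ : X → X, Set.range γ ⊆ Y ∧ α ∘ γ ∘ α = α) →
      (∃ η : X → X, Set.range η ⊆ Y ∧ η ∘ η = η ∧ α ∘ η = α ∧
        Cardinal.mk (Set.range η) = Cardinal.mk (Set.range α)) := by
    rintro ⟨γ, hγ, hreg⟩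
    have hreg' : ∀ x, α (γ (α x)) = α x := fun x => congrFun hreg x
    refine ⟨γ ∘ α, ?_, ?_, ?_, ?_⟩
    · exact (Set.range_comp_subset_range α γ).trans hγ
    · funext x
      simp only [Function.comp_apply, hreg' x]
    · funext x
      simp only [Function.comp_apply, hreg' x]
    · have hbij : Set.BijOn γ (Set.range α) (Set.range (γ ∘ α)) := by
        refine ⟨?_, ?_, ?_⟩
        · rintro a ⟨x, rfl⟩
          exact ⟨x, rfl⟩
        · rintro a ⟨x, rfl⟩ b ⟨y, rfl⟩ h
          have := congrArg α h
          rwa [hreg' x, hreg' y] at this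
        · rintro a ⟨x, rfl⟩
          exact ⟨α x, ⟨x, rfl⟩, rfl⟩
      exact (Cardinal.mk_congr (hbij.equiv γ)).symm
  -- (2) ⇒ (3)
  have h23 : (∃ η : X → X, Set.range η ⊆ Y ∧ η ∘ η = η ∧ α ∘ η = α ∧
        Cardinal.mk (Set.range η) = Cardinal.mk (Set.range α)) →
      (∃ γ : X → X, Set.range γ ⊆ Y ∧ α ∘ γ = α) := by
    rintro ⟨η, hη, _, hαη, _⟩
    exact ⟨η, hη, hαη⟩
  -- (3) ⇒ (1)
  have h31 : (∃ γ : X → X, Set.range γ ⊆ Y ∧ α ∘ γ = α) →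
      (∃ γ : X → X, Set.range γ ⊆ Y ∧ α ∘ γ ∘ α = α) := by
    rintro ⟨γ, hγ, hαγ⟩
    have hαγ' : ∀ x, α (γ x) = α x := fun x => congrFun hαγ x
    classical
    refine ⟨fun y => if h : y ∈ Set.range α then γ h.choose else hY.choose, ?_, ?_⟩
    · rintro z ⟨y, rfl⟩
      by_cases h : y ∈ Set.range α
      · simp only [dif_pos h]
        exact hγ ⟨_, rfl⟩
      · simp only [dif_neg h]
        exact hY.choose_spec
    · funext x
      have hx : α x ∈ Set.range α := ⟨x, rfl⟩
      simp only [Function.comp_apply, dif_pos hx, hαγ']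
      exact hx.choose_spec
  exact ⟨⟨h12, fun h => h31 (h23 h)⟩, ⟨fun h => h23 (h12 h), h31⟩⟩
end

section
/- Let X be a set and Y a proper subset of X with at least two elements. For α, β ∈ T(X,Y): there exists μ ∈ T(X,Y) with α = β·μ (i.e. α = μ ∘ β) if and only if ker β ⊆ ker α (i.e. for all a, b ∈ X, β(a) = β(b) implies α(a) = α(b)). Consequently, α and β are Green's 𝓡-related in T(X,Y) if and only if ker α = ker β. -/
/-- Let `X` be a set and `Y` a proper subset of `X` with at least two
elements. For `α, β ∈ T(X,Y)` (multiplication `α·β := β ∘ α`): `α = β·μ` for some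
`μ ∈ T(X,Y)` iff `ker β ⊆ ker α`. Consequently `α 𝓡 β` in `T(X,Y)` iff `ker α = ker β`. -/
theorem GreenR_in_TXY {X : Type*} (Y : Set X) (hY : Y.Nontrivial)
    (hYX : Y ≠ Set.univ) :
    (∀ α β : X → X, Set.range α ⊆ Y → Set.range β ⊆ Y →
      ((∃ μ : X → X, Set.range μ ⊆ Y ∧ α = μ ∘ β) ↔
        ∀ a b : X, β a = β b → α a = α b)) ∧
    (∀ α β : X → X, Set.range α ⊆ Y → Set.range β ⊆ Y →
      ((α = β ∨ ∃ μ μ' : X → X, Set.range μ ⊆ Y ∧ Set.range μ' ⊆ Y ∧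
          α = μ ∘ β ∧ β = μ' ∘ α) ↔
        ∀ a b : X, α a = α b ↔ β a = β b)) := by
  classical
  obtain ⟨y₀, hy₀, -⟩ := hY
  have main : ∀ α β : X → X, Set.range α ⊆ Y → Set.range β ⊆ Y →
      ((∃ μ : X → X, Set.range μ ⊆ Y ∧ α = μ ∘ β) ↔
        ∀ a b : X, β a = β b → α a = α b) := by
    intro α β hα hβ
    constructor
    · rintro ⟨μ, -, rfl⟩ a b hab
      simp [Function.comp, hab]
    · intro hker
      refine ⟨fun y => if h : ∃ a, β a = y then α h.choose else y₀, ?_, ?_⟩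
      · rintro _ ⟨y, rfl⟩
        by_cases h : ∃ a, β a = y
        · simpa [h] using hα ⟨h.choose, rfl⟩
        · simpa [h] using hy₀
      · funext x
        have h : ∃ a, β a = β x := ⟨x, rfl⟩
        simp only [Function.comp, dif_pos h]
        exact (hker _ _ h.choose_spec).symm
  refine ⟨main, fun α β hα hβ => ?_⟩
  constructor
  · rintro (rfl | ⟨μ, μ', hμ, hμ', rfl, hβ'⟩)
    · intro a b; rfl
    · intro a b
      constructor
      · intro h
        have : β a = β b := by rw [hβ']; exact congrArg μ' h
        exact this
      · intro h; simp [Function.comp, h]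
  · intro h
    obtain ⟨μ, hμ, hc⟩ := (main α β hα hβ).2 (fun a b hab => (h a b).2 hab)
    obtain ⟨μ', hμ', hc'⟩ := (main β α hβ hα).2 (fun a b hab => (h a b).1 hab)
    exact Or.inr ⟨μ, μ', hμ, hμ', hc, hc'⟩
end

section
/- Let X be a set and Y a proper subset of X with at least two elements, and let Q = {α ∈ T(X,Y) : α(X) ⊆ α(Y)}. If α ∈ T(X,Y) and β ∈ Q, then there exists λ ∈ T(X,Y) with α = λ·β (i.e. α = β ∘ λ) if and only if α(X) ⊆ β(X). Consequently, for α, β ∈ T(X,Y), α and β are Green's 𝓛-related in T(X,Y) if and only if α = β, or (α(X) = β(X) and α, β ∈ Q). -/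
lemma factor_key {X : Type*} {Y : Set X} (α β : X → X)
    (hβQ : Set.range β ⊆ β '' Y) (hsub : Set.range α ⊆ Set.range β) :
    ∃ l : X → X, Set.range l ⊆ Y ∧ α = β ∘ l := by
  have h : ∀ x : X, ∃ y, y ∈ Y ∧ β y = α x := by
    intro x
    have : α x ∈ β '' Y := hβQ (hsub ⟨x, rfl⟩)
    obtain ⟨y, hy, hyx⟩ := this
    exact ⟨y, hy, hyx⟩
  choose l hl hl2 using h
  refine ⟨l, ?_, ?_⟩
  · rintro _ ⟨x, rfl⟩; exact hl x
  · funext x; exact (hl2 x).symm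

/-- Let `X` be a set, `Y` a proper subset of `X` with at least two
elements, and `Q = {α ∈ T(X,Y) : α(X) ⊆ α(Y)}`. If `α ∈ T(X,Y)` and `β ∈ Q`, then
`α = λ·β` for some `λ ∈ T(X,Y)` iff `α(X) ⊆ β(X)`. Consequently `α 𝓛 β` in `T(X,Y)` iff
`α = β`, or (`α(X) = β(X)` and `α, β ∈ Q`). -/
theorem GreenL_in_TXY {X : Type*} (Y : Set X) (hY : Y.Nontrivial)
    (hYX : Y ≠ Set.univ) :
    (∀ α β : X → X, Set.range α ⊆ Y → Set.range β ⊆ Y → Set.range β ⊆ β '' Y →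
      ((∃ l : X → X, Set.range l ⊆ Y ∧ α = β ∘ l) ↔
        Set.range α ⊆ Set.range β)) ∧
    (∀ α β : X → X, Set.range α ⊆ Y → Set.range β ⊆ Y →
      ((α = β ∨ ∃ l l' : X → X, Set.range l ⊆ Y ∧ Set.range l' ⊆ Y ∧
          α = β ∘ l ∧ β = α ∘ l') ↔
        (α = β ∨ (Set.range α = Set.range β ∧
          Set.range α ⊆ α '' Y ∧ Set.range β ⊆ β '' Y)))) := by
  constructor
  · intro α β _ _ hβQ
    constructor
    · rintro ⟨l, hl, rfl⟩
      rintro _ ⟨x, rfl⟩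
      exact ⟨l x, rfl⟩
    · exact factor_key α β hβQ
  · intro α β _ _
    constructor
    · rintro (rfl | ⟨l, l', hl, hl', hα, hβ⟩)
      · exact Or.inl rfl
      right
      have hab : Set.range α ⊆ Set.range β := by
        rintro _ ⟨x, rfl⟩; rw [hα]; exact ⟨l x, rfl⟩
      have hba : Set.range β ⊆ Set.range α := by
        rintro _ ⟨x, rfl⟩; rw [hβ]; exact ⟨l' x, rfl⟩
      have haQ : Set.range α ⊆ β '' Y := by
        rintro _ ⟨x, rfl⟩; rw [hα]; exact ⟨l x, hl ⟨x, rfl⟩, rfl⟩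
      have hbQ : Set.range β ⊆ α '' Y := by
        rintro _ ⟨x, rfl⟩; rw [hβ]; exact ⟨l' x, hl' ⟨x, rfl⟩, rfl⟩
      have heq : Set.range α = Set.range β := le_antisymm hab hba
      exact ⟨heq, heq ▸ hbQ, heq ▸ haQ⟩
    · rintro (rfl | ⟨heq, haQ, hbQ⟩)
      · exact Or.inl rfl
      right
      obtain ⟨l, hl, hα⟩ := factor_key α β hbQ heq.le
      obtain ⟨l', hl', hβ⟩ := factor_key β α haQ heq.ge
      exact ⟨l, l', hl, hl', hα, hβ⟩
end

section
/- Let X be a set and Y a proper subset of X with at least two elements, and let Q = {α ∈ T(X,Y) : α(X) ⊆ α(Y)}. For α, β ∈ T(X,Y), α and β are Green's 𝓓-related in T(X,Y) (i.e. there exists γ ∈ T(X,Y) with α 𝓡 γ and γ 𝓛 β) if and only if ker α = ker β, or (the cardinality of α(X) equals the cardinality of β(X) and α, β ∈ Q). -/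
section Aux

variable {X : Type*}

private lemma exists_mu_aux {α γ : X → X} {Y : Set X} {y₀ : X} (hy₀ : y₀ ∈ Y)
    (hα : Set.range α ⊆ Y) (h : ∀ a b : X, γ a = γ b → α a = α b) :
    ∃ μ : X → X, Set.range μ ⊆ Y ∧ α = μ ∘ γ := by
  classical
  refine ⟨fun t => if ht : t ∈ Set.range γ then α ht.choose else y₀, ?_, ?_⟩
  · rintro _ ⟨t, rfl⟩
    by_cases ht : t ∈ Set.range γ
    · simp only [ht, dif_pos]
      exact hα (Set.mem_range_self _)
    · simp only [ht, dif_neg, not_false_iff]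
      exact hy₀
  · funext x
    have hx : γ x ∈ Set.range γ := Set.mem_range_self x
    simp only [Function.comp_apply, hx, dif_pos]
    exact (h _ _ hx.choose_spec).symm

private lemma exists_l_aux {γ β : X → X} {Y : Set X}
    (h : Set.range γ ⊆ β '' Y) :
    ∃ l : X → X, Set.range l ⊆ Y ∧ γ = β ∘ l := by
  classical
  refine ⟨fun x => (h (Set.mem_range_self x)).choose, ?_, ?_⟩
  · rintro _ ⟨x, rfl⟩
    exact (h (Set.mem_range_self x)).choose_spec.1
  · funext x
    exact ((h (Set.mem_range_self x)).choose_spec.2).symm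

private lemma card_range_eq_of_ker {α γ : X → X}
    (h : ∀ a b : X, α a = α b ↔ γ a = γ b) :
    Cardinal.mk (Set.range α) = Cardinal.mk (Set.range γ) := by
  classical
  refine Cardinal.mk_congr (Equiv.ofBijective
    (fun a => ⟨γ a.2.choose, Set.mem_range_self _⟩) ⟨?_, ?_⟩)
  · rintro ⟨a, ha⟩ ⟨b, hb⟩ hab
    have h1 : γ ha.choose = γ hb.choose := congrArg Subtype.val hab
    have h2 : α ha.choose = α hb.choose := (h _ _).mpr h1
    refine Subtype.ext ?_
    show a = b
    rw [← ha.choose_spec, ← hb.choose_spec, h2]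
  · rintro ⟨_, x, rfl⟩
    refine ⟨⟨α x, Set.mem_range_self x⟩, Subtype.ext ?_⟩
    show γ _ = γ x
    exact (h _ _).mp (Set.mem_range_self (f := α) x).choose_spec

end Aux

/-- Let `X` be a set, `Y` a proper subset of `X` with at least two
elements, and `Q = {α ∈ T(X,Y) : α(X) ⊆ α(Y)}` (multiplication `α·β := β ∘ α`).
Then `α 𝓓 β` in `T(X,Y)` (there is `γ ∈ T(X,Y)` with `α 𝓡 γ` and `γ 𝓛 β`) iff
`ker α = ker β`, or (`|α(X)| = |β(X)|` and `α, β ∈ Q`). -/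
theorem GreenD_in_TXY {X : Type*} (Y : Set X) (hY : Y.Nontrivial)
    (hYX : Y ≠ Set.univ) (α β : X → X)
    (hα : Set.range α ⊆ Y) (hβ : Set.range β ⊆ Y) :
    (∃ γ : X → X, Set.range γ ⊆ Y ∧
      (α = γ ∨ ∃ μ μ' : X → X, Set.range μ ⊆ Y ∧ Set.range μ' ⊆ Y ∧
        α = μ ∘ γ ∧ γ = μ' ∘ α) ∧
      (γ = β ∨ ∃ l l' : X → X, Set.range l ⊆ Y ∧ Set.range l' ⊆ Y ∧
        γ = β ∘ l ∧ β = γ ∘ l')) ↔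
    ((∀ a b : X, α a = α b ↔ β a = β b) ∨
      (Cardinal.mk (Set.range α) = Cardinal.mk (Set.range β) ∧
        Set.range α ⊆ α '' Y ∧ Set.range β ⊆ β '' Y)) := by
  classical
  obtain ⟨y₀, hy₀⟩ := hY.nonempty
  constructor
  · rintro ⟨γ, hγ, hR, hL⟩
    have hker : ∀ a b : X, α a = α b ↔ γ a = γ b := by
      rcases hR with rfl | ⟨μ, μ', _, _, hαμ, hγμ⟩
      · intro a b; rfl
      · intro a b
        constructor
        · intro h
          rw [hγμ]; simp only [Function.comp_apply, h]
        · intro h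
          rw [hαμ]; simp only [Function.comp_apply, h]
    rcases hL with rfl | ⟨l, l', hl, hl', hγl, hβl⟩
    · exact Or.inl hker
    · right
      have h1 : Set.range γ ⊆ β '' Y := by
        rintro _ ⟨x, rfl⟩
        exact ⟨l x, hl (Set.mem_range_self x), by rw [hγl]; rfl⟩
      have h2 : Set.range β ⊆ γ '' Y := by
        rintro _ ⟨x, rfl⟩
        exact ⟨l' x, hl' (Set.mem_range_self x), by rw [hβl]; rfl⟩
      have hγβ : Set.range γ ⊆ Set.range β := fun t ht => by
        obtain ⟨y, _, hy⟩ := h1 ht; exact ⟨y, hy⟩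
      have hβγ : Set.range β ⊆ Set.range γ := fun t ht => by
        obtain ⟨y, _, hy⟩ := h2 ht; exact ⟨y, hy⟩
      have hranges : Set.range γ = Set.range β := Set.Subset.antisymm hγβ hβγ
      refine ⟨?_, ?_, ?_⟩
      · rw [card_range_eq_of_ker hker, hranges]
      · rintro _ ⟨x, rfl⟩
        obtain ⟨y, hyY, hy⟩ := h2 (hγβ (Set.mem_range_self x))
        exact ⟨y, hyY, (hker y x).mpr hy⟩
      · exact fun t ht => h1 (hβγ ht)
  · rintro (hker | ⟨hcard, hαQ, hβQ⟩)
    · obtain ⟨μ, hμ, hμ2⟩ := exists_mu_aux (α := α) (γ := β) hy₀ hα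
        (fun a b h => (hker a b).mpr h)
      obtain ⟨μ', hμ', hμ'2⟩ := exists_mu_aux (α := β) (γ := α) hy₀ hβ
        (fun a b h => (hker a b).mp h)
      exact ⟨β, hβ, Or.inr ⟨μ, μ', hμ, hμ', hμ2, hμ'2⟩, Or.inl rfl⟩
    · obtain ⟨e⟩ := Cardinal.eq.mp hcard
      set γ : X → X := fun x => (e ⟨α x, Set.mem_range_self x⟩ : X) with hγdef
      have hγβ : Set.range γ ⊆ Set.range β := by
        rintro _ ⟨x, rfl⟩
        exact (e ⟨α x, Set.mem_range_self x⟩).2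
      have hβγ : Set.range β ⊆ Set.range γ := by
        rintro _ ⟨x, rfl⟩
        obtain ⟨x', hx'⟩ := (e.symm ⟨β x, Set.mem_range_self x⟩).2
        refine ⟨x', ?_⟩
        have : (⟨α x', Set.mem_range_self x'⟩ : Set.range α)
            = e.symm ⟨β x, Set.mem_range_self x⟩ := Subtype.ext hx'
        simp only [hγdef, this, Equiv.apply_symm_apply]
      have hγrange : Set.range γ ⊆ Y := fun t ht => hβ (hγβ ht)
      have hkerγ : ∀ a b : X, α a = α b ↔ γ a = γ b := by
        intro a b
        constructor
        · intro h
          exact congrArg (fun t : Set.range α => (e t : X)) (Subtype.ext h)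
        · intro h
          have := e.injective (Subtype.ext h)
          exact congrArg Subtype.val this
      have hγQ : Set.range γ ⊆ γ '' Y := by
        rintro _ ⟨x, rfl⟩
        obtain ⟨y, hyY, hy⟩ := hαQ (Set.mem_range_self x)
        exact ⟨y, hyY, (hkerγ y x).mp hy⟩
      obtain ⟨μ, hμ, hμ2⟩ := exists_mu_aux (α := α) (γ := γ) hy₀ hα
        (fun a b h => (hkerγ a b).mpr h)
      obtain ⟨μ', hμ', hμ'2⟩ := exists_mu_aux (α := γ) (γ := α) hy₀ hγrange
        (fun a b h => (hkerγ a b).mp h)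
      obtain ⟨l, hl, hl2⟩ := exists_l_aux (γ := γ) (β := β)
        (fun t ht => hβQ (hγβ ht))
      obtain ⟨l', hl', hl'2⟩ := exists_l_aux (γ := β) (β := γ)
        (fun t ht => hγQ (hβγ ht))
      exact ⟨γ, hγrange, Or.inr ⟨μ, μ', hμ, hμ', hμ2, hμ'2⟩,
        Or.inr ⟨l, l', hl, hl', hl2, hl'2⟩⟩
end

section
/- Let X be a set and Y a proper subset of X with at least two elements. For α, β ∈ T(X,Y): there exist λ ∈ T(X,Y) and μ ∈ T(X,Y) ∪ {id} with α = λ·β·μ (i.e. α = μ ∘ β ∘ λ, with μ possibly the identity map) if and only if the cardinality of α(X) is at most the cardinality of β(Y). Consequently, α and β are Green's 𝓙-related in T(X,Y) if and only if ker α = ker β, or the four cardinalities |α(X)|, |α(Y)|, |β(Y)|, |β(X)| are all equal. -/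
open Classical in
/-- If `#(range α) ≤ #(β '' Y)` then `α` factors as `μ ∘ β ∘ l` with `l, μ` ranging in `Y`. -/
private lemma txy_factor {X : Type*} {Y : Set X} (hYne : Y.Nonempty) (α β : X → X)
    (hα : Set.range α ⊆ Y)
    (h : Cardinal.mk (Set.range α) ≤ Cardinal.mk (β '' Y)) :
    ∃ l μ : X → X, Set.range l ⊆ Y ∧ Set.range μ ⊆ Y ∧ α = μ ∘ β ∘ l := by
  obtain ⟨f⟩ := Cardinal.le_def _ _ |>.mp h
  obtain ⟨c, hc⟩ := hYne
  have hmem : ∀ x : X, ∃ y, y ∈ Y ∧ β y = (f ⟨α x, ⟨x, rfl⟩⟩ : X) := by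
    intro x
    obtain ⟨y, hy, hby⟩ := (f ⟨α x, ⟨x, rfl⟩⟩).2
    exact ⟨y, hy, hby⟩
  choose l hlY hlβ using hmem
  refine ⟨l, fun z =>
    if h : ∃ a : Set.range α, (f a : X) = z then (h.choose : X) else c, ?_, ?_, ?_⟩
  · rintro z ⟨x, rfl⟩; exact hlY x
  · rintro z ⟨w, rfl⟩
    show (if h : ∃ a : Set.range α, (f a : X) = w then (h.choose : X) else c) ∈ Y
    split
    · next h => exact hα h.choose.2
    · exact hc
  · funext x
    show α x = _
    rw [Function.comp_apply, Function.comp_apply, hlβ x]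
    have hex : ∃ a : Set.range α, (f a : X) = (f ⟨α x, ⟨x, rfl⟩⟩ : X) :=
      ⟨⟨α x, ⟨x, rfl⟩⟩, rfl⟩
    have h1 : hex.choose = ⟨α x, ⟨x, rfl⟩⟩ :=
      f.injective (Subtype.coe_injective hex.choose_spec)
    show α x = if h : ∃ a : Set.range α,
        (f a : X) = (f ⟨α x, ⟨x, rfl⟩⟩ : X) then (h.choose : X) else c
    rw [dif_pos hex, h1]

open Classical in
/-- If `ker β ⊆ ker α` then `α = μ ∘ β` with `μ` ranging in `Y`. -/
private lemma txy_ker_factor {X : Type*} {Y : Set X} (hYne : Y.Nonempty) (α β : X → X)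
    (hα : Set.range α ⊆ Y) (hker : ∀ a b : X, β a = β b → α a = α b) :
    ∃ μ : X → X, Set.range μ ⊆ Y ∧ α = μ ∘ β := by
  obtain ⟨c, hc⟩ := hYne
  refine ⟨fun z => if h : ∃ x, β x = z then α h.choose else c, ?_, ?_⟩
  · rintro z ⟨w, rfl⟩
    show (if h : ∃ x, β x = w then α h.choose else c) ∈ Y
    split
    · next h => exact hα ⟨h.choose, rfl⟩
    · exact hc
  · funext x
    have hex : ∃ y, β y = β x := ⟨x, rfl⟩
    show α x = if h : ∃ y, β y = β x then α h.choose else c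
    rw [dif_pos hex]
    exact (hker _ _ hex.choose_spec).symm

private lemma txy_card_le {X : Type*} {Y : Set X} (α β l μ : X → X)
    (hl : Set.range l ⊆ Y) (hcomp : α = μ ∘ β ∘ l) :
    Cardinal.mk (Set.range α) ≤ Cardinal.mk (β '' Y) := by
  have hsub : Set.range α ⊆ μ '' (β '' Y) := by
    rintro z ⟨x, rfl⟩
    exact ⟨β (l x), ⟨l x, hl ⟨x, rfl⟩, rfl⟩, (congrFun hcomp x).symm⟩
  exact (Cardinal.mk_le_mk_of_subset hsub).trans (Cardinal.mk_image_le)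

private lemma txy_range_le {X : Type*} (α β μ : X → X) (hcomp : α = μ ∘ β) :
    Cardinal.mk (Set.range α) ≤ Cardinal.mk (Set.range β) := by
  have hsub : Set.range α ⊆ μ '' (Set.range β) := by
    rintro z ⟨x, rfl⟩
    exact ⟨β x, ⟨x, rfl⟩, (congrFun hcomp x).symm⟩
  exact (Cardinal.mk_le_mk_of_subset hsub).trans (Cardinal.mk_image_le)

private lemma txy_imageY_le {X : Type*} (Y : Set X) (α : X → X) :
    Cardinal.mk (α '' Y) ≤ Cardinal.mk (Set.range α) :=
  Cardinal.mk_le_mk_of_subset (Set.image_subset_range α Y)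

/-- Let `X` be a set and `Y` a proper subset of `X` with at least two
elements (multiplication on `T(X,Y)` is `α·β := β ∘ α`). For `α, β ∈ T(X,Y)`:
`α = λ·β·μ` with `λ ∈ T(X,Y)` and `μ ∈ T(X,Y) ∪ {id}` iff `|α(X)| ≤ |β(Y)|`.
Consequently `α 𝓙 β` iff `ker α = ker β` or `|α(X)| = |α(Y)| = |β(Y)| = |β(X)|`. -/
theorem GreenJ_in_TXY {X : Type*} (Y : Set X) (hY : Y.Nontrivial)
    (hYX : Y ≠ Set.univ) :
    (∀ α β : X → X, Set.range α ⊆ Y → Set.range β ⊆ Y →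
      ((∃ l μ : X → X, Set.range l ⊆ Y ∧ (Set.range μ ⊆ Y ∨ μ = id) ∧
          α = μ ∘ β ∘ l) ↔
        Cardinal.mk (Set.range α) ≤ Cardinal.mk (β '' Y))) ∧
    (∀ α β : X → X, Set.range α ⊆ Y → Set.range β ⊆ Y →
      ((∃ l μ l' μ' : X → X,
          (Set.range l ⊆ Y ∨ l = id) ∧ (Set.range μ ⊆ Y ∨ μ = id) ∧
          (Set.range l' ⊆ Y ∨ l' = id) ∧ (Set.range μ' ⊆ Y ∨ μ' = id) ∧
          α = μ ∘ β ∘ l ∧ β = μ' ∘ α ∘ l') ↔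
        ((∀ a b : X, α a = α b ↔ β a = β b) ∨
          (Cardinal.mk (Set.range α) = Cardinal.mk (α '' Y) ∧
            Cardinal.mk (α '' Y) = Cardinal.mk (β '' Y) ∧
            Cardinal.mk (β '' Y) = Cardinal.mk (Set.range β))))) := by
  have hYne : Y.Nonempty := hY.nonempty
  constructor
  · intro α β hα hβ
    constructor
    · rintro ⟨l, μ, hl, hμ, hcomp⟩
      exact txy_card_le α β l μ hl hcomp
    · intro h
      obtain ⟨l, μ, hl, hμ, hcomp⟩ := txy_factor hYne α β hα h
      exact ⟨l, μ, hl, Or.inl hμ, hcomp⟩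
  · intro α β hα hβ
    constructor
    · rintro ⟨l, μ, l', μ', hl, hμ, hl', hμ', hc1, hc2⟩
      rcases hl with hl | rfl <;> rcases hl' with hl' | rfl
      · -- both have range in Y
        right
        have hA : Cardinal.mk (Set.range α) ≤ Cardinal.mk (β '' Y) :=
          txy_card_le α β l μ hl hc1
        have hB : Cardinal.mk (Set.range β) ≤ Cardinal.mk (α '' Y) :=
          txy_card_le β α l' μ' hl' hc2
        have iA := txy_imageY_le Y α
        have iB := txy_imageY_le Y β
        exact ⟨le_antisymm ((hA.trans iB).trans hB) iA,
          le_antisymm (iA.trans hA) (iB.trans hB),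
          le_antisymm iB ((hB.trans iA).trans hA)⟩
      · -- l range ⊆ Y, l' = id
        right
        have hc2' : β = μ' ∘ α := by funext x; exact congrFun hc2 x
        have hA : Cardinal.mk (Set.range α) ≤ Cardinal.mk (β '' Y) :=
          txy_card_le α β l μ hl hc1
        have hB : Cardinal.mk (Set.range β) ≤ Cardinal.mk (Set.range α) :=
          txy_range_le β α μ' hc2'
        have hder : α = (μ ∘ μ') ∘ α ∘ l := by
          funext x
          show α x = μ (μ' (α (l x)))
          rw [congrFun hc1 x]
          show μ (β (l x)) = μ (μ' (α (l x)))
          rw [congrFun hc2' (l x)]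
          rfl
        have hC : Cardinal.mk (Set.range α) ≤ Cardinal.mk (α '' Y) :=
          txy_card_le α α l (μ ∘ μ') hl hder
        have iA := txy_imageY_le Y α
        have iB := txy_imageY_le Y β
        exact ⟨le_antisymm hC iA,
          le_antisymm (iA.trans hA) ((iB.trans hB).trans hC),
          le_antisymm iB (hB.trans hA)⟩
      · -- l = id, l' range ⊆ Y
        right
        have hc1' : α = μ ∘ β := by funext x; exact congrFun hc1 x
        have hA : Cardinal.mk (Set.range α) ≤ Cardinal.mk (Set.range β) :=
          txy_range_le α β μ hc1'
        have hB : Cardinal.mk (Set.range β) ≤ Cardinal.mk (α '' Y) :=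
          txy_card_le β α l' μ' hl' hc2
        have hder : β = (μ' ∘ μ) ∘ β ∘ l' := by
          funext x
          show β x = μ' (μ (β (l' x)))
          rw [congrFun hc2 x]
          show μ' (α (l' x)) = μ' (μ (β (l' x)))
          rw [congrFun hc1' (l' x)]
          rfl
        have hC : Cardinal.mk (Set.range β) ≤ Cardinal.mk (β '' Y) :=
          txy_card_le β β l' (μ' ∘ μ) hl' hder
        have iA := txy_imageY_le Y α
        have iB := txy_imageY_le Y β
        exact ⟨le_antisymm (hA.trans hB) iA,
          le_antisymm ((iA.trans hA).trans hC) (iB.trans hB),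
          le_antisymm iB hC⟩
      · -- both id
        left
        intro a b
        constructor
        · intro h
          have ha := congrFun hc2 a
          have hb := congrFun hc2 b
          simp only [Function.comp_apply, id_eq] at ha hb
          rw [ha, hb, h]
        · intro h
          have ha := congrFun hc1 a
          have hb := congrFun hc1 b
          simp only [Function.comp_apply, id_eq] at ha hb
          rw [ha, hb, h]
    · rintro (hker | ⟨e1, e2, e3⟩)
      · obtain ⟨μ, hμ, hμc⟩ := txy_ker_factor hYne α β hα
          (fun a b h => (hker a b).mpr h)
        obtain ⟨μ', hμ', hμc'⟩ := txy_ker_factor hYne β α hβ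
          (fun a b h => (hker a b).mp h)
        exact ⟨id, μ, id, μ', Or.inr rfl, Or.inl hμ, Or.inr rfl, Or.inl hμ',
          by rw [hμc]; rfl, by rw [hμc']; rfl⟩
      · obtain ⟨l, μ, hl, hμ, hc⟩ := txy_factor hYne α β hα (le_of_eq (e1.trans e2))
        obtain ⟨l', μ', hl', hμ', hc'⟩ := txy_factor hYne β α hβ
          (le_of_eq (e3.symm.trans e2.symm))
        exact ⟨l, μ, l', μ', Or.inl hl, Or.inl hμ, Or.inl hl', Or.inl hμ', hc, hc'⟩
end

section
/- Let X be a set and Y a proper subset of X with at least two elements, and let Q = {α ∈ T(X,Y) : α(X) ⊆ α(Y)}. For α, β ∈ Q: there exist λ, μ ∈ Q with α = λ·β·μ (i.e. α = μ ∘ β ∘ λ) if and only if the cardinality of α(X) is at most the cardinality of β(X). Consequently, α and β are Green's 𝓙-related in the semigroup Q if and only if |α(X)| = |β(X)|. -/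
/-- `α` belongs to `Q = {α ∈ T(X,Y) : α(X) ⊆ α(Y)}`. -/
def inQ {X : Type*} (Y : Set X) (α : X → X) : Prop :=
  Set.range α ⊆ Y ∧ Set.range α ⊆ α '' Y

private lemma fwd_card {X : Type*} {α β l μ : X → X} (h : α = μ ∘ β ∘ l) :
    Cardinal.mk (Set.range α) ≤ Cardinal.mk (Set.range β) := by
  subst h
  calc Cardinal.mk (Set.range (μ ∘ β ∘ l)) ≤ Cardinal.mk (μ '' Set.range β) := by
        apply Cardinal.mk_le_mk_of_subset
        rintro _ ⟨x, rfl⟩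
        exact ⟨β (l x), ⟨l x, rfl⟩, rfl⟩
    _ ≤ Cardinal.mk (Set.range β) := Cardinal.mk_image_le

private lemma bwd_construct {X : Type*} {Y : Set X} {α β : X → X} (x0 : X)
    (hα : inQ Y α) (hβ : inQ Y β)
    (h : Cardinal.mk (Set.range α) ≤ Cardinal.mk (Set.range β)) :
    ∃ l μ : X → X, inQ Y l ∧ inQ Y μ ∧ α = μ ∘ β ∘ l := by
  classical
  obtain ⟨θ⟩ := (Cardinal.le_def _ _).mp h
  have hg : ∀ a : Set.range α, ∃ y, y ∈ Y ∧ β y = (θ a : X) := by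
    intro a
    obtain ⟨y, hy, hyb⟩ := hβ.2 (θ a).2
    exact ⟨y, hy, hyb⟩
  choose g hgY hgβ using hg
  have key : ∀ a : Set.range α,
      (if h : ∃ a' : Set.range α, (θ a' : X) = (θ a : X)
        then ((Classical.choose h : Set.range α) : X) else α x0) = (a : X) := by
    intro a
    rw [dif_pos ⟨a, rfl⟩]
    have hspec := Classical.choose_spec (⟨a, rfl⟩ : ∃ a' : Set.range α, (θ a' : X) = (θ a : X))
    have heq : Classical.choose (⟨a, rfl⟩ : ∃ a' : Set.range α, (θ a' : X) = (θ a : X)) = a :=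
      θ.injective (Subtype.ext hspec)
    rw [heq]
  let μf : X → X := fun z => if h : ∃ a : Set.range α, (θ a : X) = z
      then ((Classical.choose h : Set.range α) : X) else α x0
  have hμf : ∀ z, μf z = if h : ∃ a : Set.range α, (θ a : X) = z
      then ((Classical.choose h : Set.range α) : X) else α x0 := fun z => rfl
  refine ⟨fun x => g ⟨α x, ⟨x, rfl⟩⟩, μf, ?_, ?_, ?_⟩
  · constructor
    · rintro _ ⟨x, rfl⟩
      exact hgY _
    · rintro _ ⟨x, rfl⟩
      obtain ⟨y, hy, hyx⟩ := hα.2 ⟨x, rfl⟩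
      refine ⟨y, hy, ?_⟩
      have : (⟨α y, ⟨y, rfl⟩⟩ : Set.range α) = ⟨α x, ⟨x, rfl⟩⟩ := Subtype.ext hyx
      simp [this]
  · constructor
    · rintro _ ⟨z, rfl⟩
      rw [hμf z]
      by_cases h : ∃ a : Set.range α, (θ a : X) = z
      · rw [dif_pos h]
        exact hα.1 (Classical.choose h).2
      · rw [dif_neg h]
        exact hα.1 ⟨x0, rfl⟩
    · rintro _ ⟨z, rfl⟩
      by_cases h : ∃ a : Set.range α, (θ a : X) = z
      · set a := Classical.choose h with ha
        refine ⟨(θ a : X), hβ.1 (θ a).2, ?_⟩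
        rw [hμf, hμf z, dif_pos h, key a, ← ha]
      · refine ⟨(θ ⟨α x0, ⟨x0, rfl⟩⟩ : X), hβ.1 (θ _).2, ?_⟩
        rw [hμf, hμf z, dif_neg h, key ⟨α x0, ⟨x0, rfl⟩⟩]
  · funext x
    show α x = μf (β (g ⟨α x, ⟨x, rfl⟩⟩))
    rw [hgβ ⟨α x, ⟨x, rfl⟩⟩, hμf, key ⟨α x, ⟨x, rfl⟩⟩]

/-- Let `X` be a set, `Y` a proper subset of `X` with at least two
elements, and `Q = {α ∈ T(X,Y) : α(X) ⊆ α(Y)}` (multiplication `α·β := β ∘ α`).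
For `α, β ∈ Q`: `α = λ·β·μ` with `λ, μ ∈ Q` iff `|α(X)| ≤ |β(X)|`.
Consequently `α 𝓙 β` in `Q` iff `|α(X)| = |β(X)|`. -/
theorem GreenJ_in_Q {X : Type*} (Y : Set X) (hY : Y.Nontrivial)
    (hYX : Y ≠ Set.univ) :
    (∀ α β : X → X, inQ Y α → inQ Y β →
      ((∃ l μ : X → X, inQ Y l ∧ inQ Y μ ∧ α = μ ∘ β ∘ l) ↔
        Cardinal.mk (Set.range α) ≤ Cardinal.mk (Set.range β))) ∧
    (∀ α β : X → X, inQ Y α → inQ Y β →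
      ((∃ l μ l' μ' : X → X,
          (inQ Y l ∨ l = id) ∧ (inQ Y μ ∨ μ = id) ∧
          (inQ Y l' ∨ l' = id) ∧ (inQ Y μ' ∨ μ' = id) ∧
          α = μ ∘ β ∘ l ∧ β = μ' ∘ α ∘ l') ↔
        Cardinal.mk (Set.range α) = Cardinal.mk (Set.range β))) := by
  obtain ⟨y0, hy0, -, -, -⟩ := hY
  constructor
  · intro α β hα hβ
    constructor
    · rintro ⟨l, μ, -, -, h⟩
      exact fwd_card h
    · intro h
      exact bwd_construct y0 hα hβ h
  · intro α β hα hβ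
    constructor
    · rintro ⟨l, μ, l', μ', -, -, -, -, h1, h2⟩
      exact le_antisymm (fwd_card h1) (fwd_card h2)
    · intro h
      obtain ⟨l, μ, hl, hμ, heq⟩ := bwd_construct y0 hα hβ h.le
      obtain ⟨l', μ', hl', hμ', heq'⟩ := bwd_construct y0 hβ hα h.ge
      exact ⟨l, μ, l', μ', Or.inl hl, Or.inl hμ, Or.inl hl', Or.inl hμ', heq, heq'⟩
end

section
/- Let X be a set and Y a proper subset of X with at least two elements. For a nonempty subset S ⊆ T(X,Y), define r(S) as the least cardinal κ ≤ |Y|⁺ such that |α(Y)| < κ for all α ∈ S, and define K(S) = {β ∈ T(X,Y) : ker α ⊆ ker β for some α ∈ S}; for a cardinal k let T_k = {α ∈ T(X,Y) : |α(X)| < k}. Then the (nonempty two-sided) ideals of T(X,Y) are precisely the sets T_{r(S)} ∪ K(S) and T_{r(S)⁺} ∪ K(S), where S ranges over the nonempty subsets of T(X,Y). -/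
universe u

/-- `T_k`: the maps in `T(X,Y)` of rank strictly less than `k`. -/
def Tk {X : Type u} (Y : Set X) (k : Cardinal.{u}) : Set (X → X) :=
  {α | Set.range α ⊆ Y ∧ Cardinal.mk (Set.range α) < k}

/-- `r(S)`: the least cardinal `κ ≤ |Y|⁺` such that `|α(Y)| < κ` for all `α ∈ S`. -/
noncomputable def rS {X : Type u} (Y : Set X) (S : Set (X → X)) : Cardinal.{u} :=
  sInf {κ : Cardinal.{u} | κ ≤ Order.succ (Cardinal.mk ↥Y) ∧
    ∀ α ∈ S, Cardinal.mk (α '' Y) < κ}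

/-- `K(S)`: the maps in `T(X,Y)` whose kernel contains the kernel of some `α ∈ S`. -/
def KS {X : Type u} (Y : Set X) (S : Set (X → X)) : Set (X → X) :=
  {β | Set.range β ⊆ Y ∧ ∃ α ∈ S, ∀ a b : X, α a = α b → β a = β b}

open Cardinal

lemma mk_image_le_of_ker {X : Type u} (α γ : X → X)
    (h : ∀ a b : X, α a = α b → γ a = γ b) (Y : Set X) :
    Cardinal.mk (γ '' Y) ≤ Cardinal.mk (α '' Y) := by
  apply Cardinal.mk_le_of_injective (f := fun z : ↥(γ '' Y) =>
    (⟨α z.2.choose, Set.mem_image_of_mem α z.2.choose_spec.1⟩ : ↥(α '' Y)))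
  rintro ⟨z₁, hz₁⟩ ⟨z₂, hz₂⟩ he
  simp only [Subtype.mk.injEq] at he ⊢
  have := h _ _ he
  rw [hz₁.choose_spec.2, hz₂.choose_spec.2] at this
  exact this

lemma rS_spec {X : Type u} (Y : Set X) (S : Set (X → X))
    (hST : S ⊆ {α | Set.range α ⊆ Y}) :
    rS Y S ≤ Order.succ (Cardinal.mk ↥Y) ∧
      ∀ α ∈ S, Cardinal.mk (α '' Y) < rS Y S := by
  have hmem : Order.succ (Cardinal.mk ↥Y) ∈ {κ : Cardinal.{u} |
      κ ≤ Order.succ (Cardinal.mk ↥Y) ∧ ∀ α ∈ S, Cardinal.mk (α '' Y) < κ} := by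
    refine ⟨le_rfl, fun α hα => ?_⟩
    have h1 : Cardinal.mk (α '' Y) ≤ Cardinal.mk ↥Y :=
      Cardinal.mk_le_mk_of_subset (Set.image_subset_iff.mpr
        (fun y _ => hST hα (Set.mem_range_self y)))
    exact lt_of_le_of_lt h1 (Order.lt_succ _)
  exact csInf_mem ⟨_, hmem⟩

/-- Let `X` be a set and `Y` a proper subset of `X` with at least two
elements (multiplication on `T(X,Y)` is `α·β := β ∘ α`). The nonempty two-sided ideals
of `T(X,Y)` are precisely the sets `T_{r(S)} ∪ K(S)` and `T_{r(S)⁺} ∪ K(S)`, where `S`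
ranges over the nonempty subsets of `T(X,Y)`. -/
theorem ideals_of_TXY {X : Type u} (Y : Set X) (hY : Y.Nontrivial)
    (hYX : Y ≠ Set.univ) (I : Set (X → X)) :
    (I.Nonempty ∧ I ⊆ {α | Set.range α ⊆ Y} ∧
      ∀ α ∈ I, ∀ β : X → X, Set.range β ⊆ Y → β ∘ α ∈ I ∧ α ∘ β ∈ I) ↔
    ∃ S : Set (X → X), S.Nonempty ∧ S ⊆ {α | Set.range α ⊆ Y} ∧
      (I = Tk Y (rS Y S) ∪ KS Y S ∨ I = Tk Y (Order.succ (rS Y S)) ∪ KS Y S) := by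
  obtain ⟨y₀, hy₀⟩ := hY.nonempty
  classical
  constructor
  · rintro ⟨⟨α₀, hα₀⟩, hIT, hcl⟩
    refine ⟨I, ⟨α₀, hα₀⟩, hIT, Or.inl ?_⟩
    ext γ
    constructor
    · intro hγ
      exact Or.inr ⟨hIT hγ, γ, hγ, fun a b h => h⟩
    · rintro (⟨hrγ, hcγ⟩ | ⟨hrγ, α, hα, hker⟩)
      · -- γ ∈ Tk Y (rS Y I) : find α ∈ I with |range γ| ≤ |α '' Y|
        have hex : ∃ α ∈ I, Cardinal.mk (Set.range γ) ≤ Cardinal.mk (α '' Y) := by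
          by_contra hc
          push_neg at hc
          have hmem : Cardinal.mk (Set.range γ) ∈ {κ : Cardinal.{u} |
              κ ≤ Order.succ (Cardinal.mk ↥Y) ∧ ∀ α ∈ I, Cardinal.mk (α '' Y) < κ} :=
            ⟨le_trans (Cardinal.mk_le_mk_of_subset hrγ) (Order.le_succ _), hc⟩
          exact absurd (csInf_le' hmem) (not_le_of_gt hcγ)
        obtain ⟨α, hα, hle⟩ := hex
        obtain ⟨j⟩ := Cardinal.le_def _ _ |>.mp hle
        -- choose preimages: for z : range γ, pick w z ∈ Y with α (w z) = j z
        have hw : ∀ z : ↥(Set.range γ), ∃ w, w ∈ Y ∧ α w = (j z : X) := by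
          intro z
          obtain ⟨w, hwY, hwe⟩ := (j z).2
          exact ⟨w, hwY, hwe⟩
        choose w hwY hwα using hw
        set φ : X → X := fun x => w ⟨γ x, Set.mem_range_self x⟩ with hφ
        have hrφ : Set.range φ ⊆ Y := by
          rintro _ ⟨x, rfl⟩; exact hwY _
        set ψ : X → X := fun v =>
          if h : ∃ z : ↥(Set.range γ), (j z : X) = v then (h.choose : X) else y₀ with hψ
        have hrψ : Set.range ψ ⊆ Y := by
          rintro _ ⟨v, rfl⟩
          simp only [hψ]
          split
          · next h => exact hrγ h.choose.2
          · exact hy₀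
        have hcomp : ψ ∘ α ∘ φ = γ := by
          funext x
          simp only [Function.comp_apply, hφ, hψ, hwα]
          have hex2 : ∃ z : ↥(Set.range γ),
              (j z : X) = (j ⟨γ x, Set.mem_range_self x⟩ : X) :=
            ⟨⟨γ x, Set.mem_range_self x⟩, rfl⟩
          rw [dif_pos hex2]
          have : hex2.choose = ⟨γ x, Set.mem_range_self x⟩ :=
            j.injective (Subtype.coe_injective hex2.choose_spec)
          rw [this]
        have h1 : α ∘ φ ∈ I := (hcl α hα φ hrφ).2
        have h2 : ψ ∘ (α ∘ φ) ∈ I := (hcl _ h1 ψ hrψ).1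
        rwa [← Function.comp_assoc, Function.comp_assoc, hcomp] at h2
        -- possibly comp.assoc naming
      · -- γ ∈ KS : factor γ = g ∘ α
        set g : X → X := fun v => if h : ∃ a, α a = v then γ h.choose else y₀ with hg
        have hrg : Set.range g ⊆ Y := by
          rintro _ ⟨v, rfl⟩
          simp only [hg]
          split
          · exact hrγ (Set.mem_range_self _)
          · exact hy₀
        have hcomp : g ∘ α = γ := by
          funext x
          simp only [Function.comp_apply, hg]
          have hex2 : ∃ a, α a = α x := ⟨x, rfl⟩
          rw [dif_pos hex2]
          exact hker _ _ hex2.choose_spec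
        have := (hcl α hα g hrg).1
        rwa [hcomp] at this
  · rintro ⟨S, ⟨α₀, hα₀S⟩, hST, hI⟩
    obtain ⟨hrle, hrlt⟩ := rS_spec Y S hST
    -- unify the two cases
    obtain ⟨k, hk, hkI⟩ : ∃ k : Cardinal.{u}, (∀ α ∈ S, Cardinal.mk (α '' Y) < k) ∧
        I = Tk Y k ∪ KS Y S := by
      rcases hI with h | h
      · exact ⟨rS Y S, hrlt, h⟩
      · exact ⟨Order.succ (rS Y S), fun α hα =>
          lt_of_lt_of_le (hrlt α hα) (Order.le_succ _), h⟩
    subst hkI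
    refine ⟨⟨fun _ => y₀, Or.inr ⟨?_, α₀, hα₀S, fun _ _ _ => rfl⟩⟩, ?_, ?_⟩
    · rintro _ ⟨x, rfl⟩; exact hy₀
    · rintro γ (⟨h, _⟩ | ⟨h, _⟩) <;> exact h
    · rintro γ (⟨hrγ, hcγ⟩ | ⟨hrγ, α, hαS, hker⟩) β hβ
      · constructor
        · -- β ∘ γ ∈ Tk
          refine Or.inl ⟨?_, ?_⟩
          · rintro _ ⟨x, rfl⟩; exact hβ (Set.mem_range_self _)
          · calc Cardinal.mk (Set.range (β ∘ γ))
                = Cardinal.mk (β '' Set.range γ) := by rw [Set.range_comp]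
              _ ≤ Cardinal.mk (Set.range γ) := Cardinal.mk_image_le
              _ < _ := hcγ
        · -- γ ∘ β ∈ Tk
          refine Or.inl ⟨?_, ?_⟩
          · rintro _ ⟨x, rfl⟩; exact hrγ (Set.mem_range_self _)
          · refine lt_of_le_of_lt (Cardinal.mk_le_mk_of_subset ?_) hcγ
            rw [Set.range_comp]
            exact Set.image_subset_range _ _
      · constructor
        · -- β ∘ γ ∈ KS
          refine Or.inr ⟨?_, α, hαS, fun a b h => congrArg β (hker a b h)⟩
          rintro _ ⟨x, rfl⟩; exact hβ (Set.mem_range_self _)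
        · -- γ ∘ β ∈ Tk
          refine Or.inl ⟨?_, ?_⟩
          · rintro _ ⟨x, rfl⟩; exact hrγ (Set.mem_range_self _)
          · have h1 : Set.range (γ ∘ β) ⊆ γ '' Y := by
              rw [Set.range_comp]
              exact Set.image_mono (f := γ) (fun v hv => hβ hv)
            calc Cardinal.mk (Set.range (γ ∘ β))
                ≤ Cardinal.mk (γ '' Y) := Cardinal.mk_le_mk_of_subset h1
              _ ≤ Cardinal.mk (α '' Y) := mk_image_le_of_ker α γ hker Y
              _ < k := hk α hαS
end

section
/- Let X be a set and Y a proper subset of X with at least two elements. For α, β ∈ T(X,Y), the following are equivalent: (1) α 𝓛̃ β, i.e. for every idempotent η ∈ T(X,Y) one has α·η = α if and only if β·η = β; (2) α 𝓛* β, i.e. for all γ, δ ∈ T(X,Y) ∪ {id}, α·γ = α·δ if and only if β·γ = β·δ; (3) α(X) = β(X). In particular the relations 𝓛* and 𝓛̃ coincide on T(X,Y). -/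
private lemma comp_eq_self_iff {X : Type*} (α η : X → X) :
    η ∘ α = α ↔ ∀ y ∈ Set.range α, η y = y := by
  constructor
  · rintro h y ⟨x, rfl⟩
    exact congrFun h x
  · intro h
    funext x
    exact h (α x) ⟨x, rfl⟩

private lemma comp_eq_comp_iff {X : Type*} (α γ δ : X → X) :
    γ ∘ α = δ ∘ α ↔ ∀ y ∈ Set.range α, γ y = δ y := by
  constructor
  · rintro h y ⟨x, rfl⟩
    exact congrFun h x
  · intro h
    funext x
    exact h (α x) ⟨x, rfl⟩

private lemma auxL {X : Type*} (Y : Set X) (x₀ : X) (α β : X → X)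
    (hα : Set.range α ⊆ Y)
    (h : ∀ η : X → X, Set.range η ⊆ Y → η ∘ η = η →
        ((η ∘ α = α) ↔ (η ∘ β = β))) :
    Set.range β ⊆ Set.range α := by
  classical
  set η : X → X := fun x => if x ∈ Set.range α then x else α x₀ with hη
  have hrange : Set.range η ⊆ Set.range α := by
    rintro _ ⟨x, rfl⟩
    by_cases hx : x ∈ Set.range α
    · rw [show η x = x from if_pos hx]; exact hx
    · rw [show η x = α x₀ from if_neg hx]; exact ⟨x₀, rfl⟩
  have hid : ∀ y ∈ Set.range α, η y = y := by
    intro y hy; exact if_pos hy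
  have hidem : η ∘ η = η := by
    funext x
    exact hid (η x) (hrange ⟨x, rfl⟩)
  have hηα : η ∘ α = α := by
    funext x
    exact hid (α x) ⟨x, rfl⟩
  have hηβ : η ∘ β = β := (h η (hrange.trans hα) hidem).mp hηα
  rintro _ ⟨x, rfl⟩
  have : η (β x) = β x := congrFun hηβ x
  exact this ▸ hrange ⟨β x, rfl⟩

private lemma auxL' {X : Type*} (Y : Set X) {y₁ y₂ : X} (hy₁ : y₁ ∈ Y) (hy₂ : y₂ ∈ Y)
    (hne : y₁ ≠ y₂) (α β : X → X)
    (h : ∀ γ δ : X → X, (Set.range γ ⊆ Y ∨ γ = id) → (Set.range δ ⊆ Y ∨ δ = id) →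
        ((γ ∘ α = δ ∘ α) ↔ (γ ∘ β = δ ∘ β))) :
    Set.range β ⊆ Set.range α := by
  classical
  intro b hb
  by_contra hbα
  set γ : X → X := fun _ => y₁ with hγ
  set δ : X → X := fun x => if x = b then y₂ else y₁ with hδ
  have hγY : Set.range γ ⊆ Y := by rintro _ ⟨x, rfl⟩; exact hy₁
  have hδY : Set.range δ ⊆ Y := by
    rintro _ ⟨x, rfl⟩
    by_cases hx : x = b <;> simp [hδ, hx, hy₁, hy₂]
  have h1 : γ ∘ α = δ ∘ α := by
    funext x
    have : α x ≠ b := fun hc => hbα ⟨x, hc⟩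
    simp [hγ, hδ, this]
  have h2 : γ ∘ β = δ ∘ β := (h γ δ (Or.inl hγY) (Or.inl hδY)).mp h1
  obtain ⟨x, rfl⟩ := hb
  have := congrFun h2 x
  simp [hγ, hδ] at this
  exact hne this

/-- Let `X` be a set and `Y` a proper subset of `X` with at least two
elements (multiplication on `T(X,Y)` is `α·β := β ∘ α`, so `α·η = η ∘ α`). For
`α, β ∈ T(X,Y)` the following are equivalent: `α 𝓛̃ β`; `α 𝓛* β`; `α(X) = β(X)`.
In particular `𝓛*` and `𝓛̃` coincide on `T(X,Y)`. -/
theorem Ltilde_eq_Lstar_in_TXY {X : Type*} (Y : Set X) (hY : Y.Nontrivial)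
    (hYX : Y ≠ Set.univ) (α β : X → X)
    (hα : Set.range α ⊆ Y) (hβ : Set.range β ⊆ Y) :
    ((∀ η : X → X, Set.range η ⊆ Y → η ∘ η = η →
        ((η ∘ α = α) ↔ (η ∘ β = β))) ↔
      Set.range α = Set.range β) ∧
    ((∀ γ δ : X → X, (Set.range γ ⊆ Y ∨ γ = id) → (Set.range δ ⊆ Y ∨ δ = id) →
        ((γ ∘ α = δ ∘ α) ↔ (γ ∘ β = δ ∘ β))) ↔
      Set.range α = Set.range β) := by
  obtain ⟨y₁, hy₁, y₂, hy₂, hne⟩ := hY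
  constructor
  · constructor
    · intro h
      exact Set.Subset.antisymm
        (auxL Y y₁ β α hβ (fun η h1 h2 => (h η h1 h2).symm))
        (auxL Y y₁ α β hα h)
    · rintro h η hηY hidem
      rw [comp_eq_self_iff, comp_eq_self_iff, h]
  · constructor
    · intro h
      exact Set.Subset.antisymm
        (auxL' Y hy₁ hy₂ (fun e => hne e) β α (fun γ δ h1 h2 => (h γ δ h1 h2).symm))
        (auxL' Y hy₁ hy₂ (fun e => hne e) α β h)
    · rintro h γ δ _ _
      rw [comp_eq_comp_iff, comp_eq_comp_iff, h]
end

section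
/- Let X be a set and Y a proper subset of X with at least two elements, and let Q = {α ∈ T(X,Y) : α(X) ⊆ α(Y)}. For α, β ∈ T(X,Y), α 𝓡* β holds in T(X,Y) if and only if one of the following occurs: (1) α, β ∈ Q and ker α = ker β; or (2) α, β ∉ Q and ker α ∩ (Y × Y) = ker β ∩ (Y × Y), i.e. for all y, y' ∈ Y, α(y) = α(y') if and only if β(y) = β(y'). -/
/-- Auxiliary lemma: if `α` is regular (`range α ⊆ α '' Y`), the one-sided `R*`-type
condition transfers regularity and kernel inclusion to `β`. -/
lemma key_aux {X : Type*} (Y : Set X) (α β : X → X)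
    (h : ∀ γ : X → X, Set.range γ ⊆ Y → α ∘ γ = α → β ∘ γ = β)
    (kerY : ∀ y ∈ Y, ∀ y' ∈ Y, α y = α y' → β y = β y')
    (hQ : Set.range α ⊆ α '' Y) :
    Set.range β ⊆ β '' Y ∧ ∀ a b : X, α a = α b → β a = β b := by
  classical
  have hx : ∀ x : X, ∃ y, y ∈ Y ∧ α y = α x := by
    intro x
    rcases hQ ⟨x, rfl⟩ with ⟨y, hy, hxy⟩
    exact ⟨y, hy, hxy⟩
  choose γ hγY hγα using hx
  have hrange : Set.range γ ⊆ Y := by rintro _ ⟨x, rfl⟩; exact hγY x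
  have hcomp : α ∘ γ = α := funext fun x => hγα x
  have hβcomp : β ∘ γ = β := h γ hrange hcomp
  constructor
  · rintro _ ⟨x, rfl⟩
    exact ⟨γ x, hγY x, congrFun hβcomp x⟩
  · intro a b hab
    have h1 : α (γ a) = α (γ b) := by rw [hγα a, hγα b, hab]
    have h2 : β (γ a) = β (γ b) := kerY _ (hγY a) _ (hγY b) h1
    calc β a = β (γ a) := (congrFun hβcomp a).symm
      _ = β (γ b) := h2
      _ = β b := congrFun hβcomp b

/-- Let `X` be a set, `Y` a proper subset of `X` with at least two
elements, and `Q = {α ∈ T(X,Y) : α(X) ⊆ α(Y)}` (multiplication `α·β := β ∘ α`, so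
`γ·α = α ∘ γ`). For `α, β ∈ T(X,Y)`: `α 𝓡* β` iff either (`α, β ∈ Q` and
`ker α = ker β`) or (`α, β ∉ Q` and `ker α ∩ (Y×Y) = ker β ∩ (Y×Y)`). -/
theorem Rstar_in_TXY {X : Type*} (Y : Set X) (hY : Y.Nontrivial)
    (hYX : Y ≠ Set.univ) (α β : X → X)
    (hα : Set.range α ⊆ Y) (hβ : Set.range β ⊆ Y) :
    (∀ γ δ : X → X, (Set.range γ ⊆ Y ∨ γ = id) → (Set.range δ ⊆ Y ∨ δ = id) →
      ((α ∘ γ = α ∘ δ) ↔ (β ∘ γ = β ∘ δ))) ↔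
    ((Set.range α ⊆ α '' Y ∧ Set.range β ⊆ β '' Y ∧
        ∀ a b : X, α a = α b ↔ β a = β b) ∨
      (¬ Set.range α ⊆ α '' Y ∧ ¬ Set.range β ⊆ β '' Y ∧
        ∀ y ∈ Y, ∀ y' ∈ Y, (α y = α y' ↔ β y = β y'))) := by
  classical
  constructor
  · intro h
    have kerY : ∀ y ∈ Y, ∀ y' ∈ Y, (α y = α y' ↔ β y = β y') := by
      intro y hy y' hy'
      have hiff := h (fun _ => y) (fun _ => y')
        (Or.inl (by rintro _ ⟨x, rfl⟩; exact hy))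
        (Or.inl (by rintro _ ⟨x, rfl⟩; exact hy'))
      constructor
      · intro he
        exact congrFun (hiff.mp (funext fun _ => he)) y
      · intro he
        exact congrFun (hiff.mpr (funext fun _ => he)) y
    have hab : ∀ γ : X → X, Set.range γ ⊆ Y → α ∘ γ = α → β ∘ γ = β := by
      intro γ hγ hc
      exact (h γ id (Or.inl hγ) (Or.inr rfl)).mp hc
    have hba : ∀ γ : X → X, Set.range γ ⊆ Y → β ∘ γ = β → α ∘ γ = α := by
      intro γ hγ hc
      exact (h γ id (Or.inl hγ) (Or.inr rfl)).mpr hc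
    by_cases hQα : Set.range α ⊆ α '' Y
    · obtain ⟨hQβ, hk1⟩ := key_aux Y α β hab
        (fun y hy y' hy' => (kerY y hy y' hy').mp) hQα
      obtain ⟨_, hk2⟩ := key_aux Y β α hba
        (fun y hy y' hy' => (kerY y hy y' hy').mpr) hQβ
      exact Or.inl ⟨hQα, hQβ, fun a b => ⟨hk1 a b, hk2 a b⟩⟩
    · refine Or.inr ⟨hQα, ?_, kerY⟩
      intro hQβ
      obtain ⟨hQα', _⟩ := key_aux Y β α hba
        (fun y hy y' hy' => (kerY y hy y' hy').mpr) hQβ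
      exact hQα hQα'
  · rintro (⟨hQα, hQβ, hker⟩ | ⟨hQα, hQβ, hker⟩) γ δ hγ hδ
    · constructor
      · intro h; funext x; exact (hker (γ x) (δ x)).mp (congrFun h x)
      · intro h; funext x; exact (hker (γ x) (δ x)).mpr (congrFun h x)
    · rcases hγ with hγ | rfl <;> rcases hδ with hδ | rfl
      · constructor
        · intro h; funext x
          exact (hker _ (hγ ⟨x, rfl⟩) _ (hδ ⟨x, rfl⟩)).mp (congrFun h x)
        · intro h; funext x
          exact (hker _ (hγ ⟨x, rfl⟩) _ (hδ ⟨x, rfl⟩)).mpr (congrFun h x)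
      · -- γ into Y, δ = id : both sides are impossible since α, β ∉ Q
        constructor
        · intro h
          refine absurd ?_ hQα
          rintro _ ⟨x, rfl⟩
          exact ⟨γ x, hγ ⟨x, rfl⟩, congrFun h x⟩
        · intro h
          refine absurd ?_ hQβ
          rintro _ ⟨x, rfl⟩
          exact ⟨γ x, hγ ⟨x, rfl⟩, congrFun h x⟩
      · -- γ = id, δ into Y : both sides are impossible since α, β ∉ Q
        constructor
        · intro h
          refine absurd ?_ hQα
          rintro _ ⟨x, rfl⟩
          exact ⟨δ x, hδ ⟨x, rfl⟩, (congrFun h x).symm⟩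
        · intro h
          refine absurd ?_ hQβ
          rintro _ ⟨x, rfl⟩
          exact ⟨δ x, hδ ⟨x, rfl⟩, (congrFun h x).symm⟩
      · simp
end

section
/- Let X be a set and Y a proper subset of X with at least two elements, and let Q = {α ∈ T(X,Y) : α(X) ⊆ α(Y)}. For α, β ∈ T(X,Y), α 𝓡̃ β holds in T(X,Y) (i.e. for every idempotent η ∈ T(X,Y), η·α = α if and only if η·β = β) if and only if either both α ∉ Q and β ∉ Q, or (α, β ∈ Q and ker α = ker β). -/
/-- Helper: one-sided version. If every idempotent in `T(X,Y)` fixing `α` also fixes `β`,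
and `α` is regular, then `β` is regular and `ker α ⊆ ker β`. -/
lemma Rtilde_aux {X : Type*} [Nonempty X] (Y : Set X) (α β : X → X)
    (h : ∀ η : X → X, Set.range η ⊆ Y → η ∘ η = η → (α ∘ η = α → β ∘ η = β))
    (hQα : Set.range α ⊆ α '' Y) :
    Set.range β ⊆ β '' Y ∧ ∀ a b : X, α a = α b → β a = β b := by
  classical
  set η := fun x => Function.invFunOn α Y (α x) with hηdef
  have hex : ∀ x, ∃ a ∈ Y, α a = α x := by
    intro x
    obtain ⟨y, hy, hxy⟩ := hQα ⟨x, rfl⟩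
    exact ⟨y, hy, hxy⟩
  have hαη : ∀ x, α (η x) = α x := fun x => Function.invFunOn_eq (hex x)
  have hrange : Set.range η ⊆ Y := by
    rintro _ ⟨x, rfl⟩; exact Function.invFunOn_mem (hex x)
  have hidem : η ∘ η = η := by
    funext x
    show Function.invFunOn α Y (α (η x)) = η x
    rw [hαη x]
  have hfixβ : β ∘ η = β := h η hrange hidem (funext hαη)
  refine ⟨?_, ?_⟩
  · rintro _ ⟨x, rfl⟩
    exact ⟨η x, hrange ⟨x, rfl⟩, congrFun hfixβ x⟩
  · intro a b hab
    have hη : η a = η b := by simp only [hηdef, hab]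
    calc β a = β (η a) := (congrFun hfixβ a).symm
      _ = β (η b) := by rw [hη]
      _ = β b := congrFun hfixβ b

/-- Let `X` be a set, `Y` a proper subset of `X` with at least two
elements, and `Q = {α ∈ T(X,Y) : α(X) ⊆ α(Y)}` (multiplication `α·β := β ∘ α`, so
`η·α = α ∘ η`). For `α, β ∈ T(X,Y)`: `α 𝓡̃ β` iff either both `α, β ∉ Q`, or
(`α, β ∈ Q` and `ker α = ker β`). -/
theorem Rtilde_in_TXY {X : Type*} (Y : Set X) (hY : Y.Nontrivial)
    (hYX : Y ≠ Set.univ) (α β : X → X)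
    (hα : Set.range α ⊆ Y) (hβ : Set.range β ⊆ Y) :
    (∀ η : X → X, Set.range η ⊆ Y → η ∘ η = η →
      ((α ∘ η = α) ↔ (β ∘ η = β))) ↔
    ((¬ Set.range α ⊆ α '' Y ∧ ¬ Set.range β ⊆ β '' Y) ∨
      (Set.range α ⊆ α '' Y ∧ Set.range β ⊆ β '' Y ∧
        ∀ a b : X, α a = α b ↔ β a = β b)) := by
  classical
  have : Nonempty X := ⟨hY.nonempty.choose⟩
  constructor
  · intro h
    by_cases hQα : Set.range α ⊆ α '' Y
    · obtain ⟨hQβ, hker₁⟩ :=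
        Rtilde_aux Y α β (fun η h1 h2 => (h η h1 h2).mp) hQα
      obtain ⟨_, hker₂⟩ :=
        Rtilde_aux Y β α (fun η h1 h2 => (h η h1 h2).mpr) hQβ
      exact Or.inr ⟨hQα, hQβ, fun a b => ⟨hker₁ a b, hker₂ a b⟩⟩
    · have hQβ : ¬ Set.range β ⊆ β '' Y := fun hQβ =>
        hQα (Rtilde_aux Y β α (fun η h1 h2 => (h η h1 h2).mpr) hQβ).1
      exact Or.inl ⟨hQα, hQβ⟩
  · rintro (⟨hQα, hQβ⟩ | ⟨hQα, hQβ, hker⟩) η hrange hidem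
    · constructor
      · intro hfix
        exact absurd (fun _ ⟨x, hx⟩ => hx ▸ ⟨η x, hrange ⟨x, rfl⟩, congrFun hfix x⟩) hQα
      · intro hfix
        exact absurd (fun _ ⟨x, hx⟩ => hx ▸ ⟨η x, hrange ⟨x, rfl⟩, congrFun hfix x⟩) hQβ
    · constructor
      · intro hfix
        funext x
        exact (hker (η x) x).mp (congrFun hfix x)
      · intro hfix
        funext x
        exact (hker (η x) x).mpr (congrFun hfix x)
end

section
/- Let X be a set and Y a proper subset of X with at least two elements. The relation 𝓡̃ on T(X,Y) is a left congruence (i.e. α 𝓡̃ β implies γ·α 𝓡̃ γ·β for all γ ∈ T(X,Y)) if and only if Y has exactly two elements. (This is the specialization to sets of the paper's criterion, since for a pure set one-dimensional subalgebras are singletons and there are no constants.) -/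
/-- Auxiliary lemma: if `Y = {a,b}`, `α 𝓡̃ β`, and `α a = α b`, then `β a = β b`. -/
private lemma aux_const {X : Type*} {a b : X} (hab : a ≠ b)
    {α β : X → X}
    (hβv : ∀ z, β z = a ∨ β z = b)
    (H : ∀ η : X → X, Set.range η ⊆ ({a, b} : Set X) → η ∘ η = η →
      ((α ∘ η = α) ↔ (β ∘ η = β)))
    (h1 : α a = α b) : β a = β b := by
  classical
  by_contra h2
  set η : X → X := fun z => if β z = β a then a else b with hη
  have hba : ¬ (β b = β a) := fun h => h2 h.symm
  have hηa : η a = a := by simp [hη]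
  have hηb : η b = b := by simp [hη, hba]
  have hηab : ∀ z, η z = a ∨ η z = b := by
    intro z; by_cases h : β z = β a <;> simp [hη, h]
  have hηrange : Set.range η ⊆ ({a, b} : Set X) := by
    rintro _ ⟨z, rfl⟩
    rcases hηab z with h | h <;> simp [h]
  have hidem : η ∘ η = η := by
    funext z
    rcases hηab z with h | h <;> simp only [Function.comp_apply, h, hηa, hηb]
  have hβη : β ∘ η = β := by
    funext z
    by_cases h : β z = β a
    · have : η z = a := by simp [hη, h]
      simp only [Function.comp_apply, this, h]
    · have hzb : β z = β b := by
        rcases hβv z with h' | h' <;> rcases hβv a with h'' | h'' <;>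
          rcases hβv b with h''' | h''' <;> simp_all
      have : η z = b := by simp [hη, h]
      simp only [Function.comp_apply, this, hzb]
  have hαη : α ∘ η = α := (H η hηrange hidem).mpr hβη
  have hαconst : ∀ z, α z = α a := by
    intro z
    have h0 : α (η z) = α z := congrFun hαη z
    rcases hηab z with h | h
    · rw [h] at h0; exact h0.symm
    · rw [h] at h0; exact h0.symm.trans h1.symm
  have hca : Set.range (fun _ : X => a) ⊆ ({a, b} : Set X) := by
    rintro _ ⟨z, rfl⟩; simp
  have hcidem : (fun _ : X => a) ∘ (fun _ : X => a) = (fun _ : X => a) := rfl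
  have hαc : α ∘ (fun _ : X => a) = α := by
    funext z
    simp only [Function.comp_apply]
    rw [hαconst z, hαconst a]
  have hβc : β ∘ (fun _ : X => a) = β := (H _ hca hcidem).mp hαc
  exact h2 (congrFun hβc b)

/-- Let `X` be a set and `Y` a proper subset of `X` with at least two
elements (multiplication on `T(X,Y)` is `α·β := β ∘ α`, so `γ·α = α ∘ γ` and
`η·α = α ∘ η`). The relation `𝓡̃` on `T(X,Y)` is a left congruence if and only if `Y`
has exactly two elements. -/
theorem Rtilde_left_congruence_iff {X : Type*} (Y : Set X) (hY : Y.Nontrivial)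
    (hYX : Y ≠ Set.univ) :
    (∀ α β γ : X → X, Set.range α ⊆ Y → Set.range β ⊆ Y → Set.range γ ⊆ Y →
      (∀ η : X → X, Set.range η ⊆ Y → η ∘ η = η →
        ((α ∘ η = α) ↔ (β ∘ η = β))) →
      (∀ η : X → X, Set.range η ⊆ Y → η ∘ η = η →
        (((α ∘ γ) ∘ η = α ∘ γ) ↔ ((β ∘ γ) ∘ η = β ∘ γ)))) ↔
    ∃ a b : X, a ≠ b ∧ Y = {a, b} := by
  classical
  constructor
  · intro H
    obtain ⟨a, ha, b, hb, hab⟩ := hY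
    refine ⟨a, b, hab, ?_⟩
    by_contra hne
    -- there is a third element `c ∈ Y`
    have hex : ∃ c ∈ Y, c ≠ a ∧ c ≠ b := by
      by_contra h
      push_neg at h
      apply hne
      apply Set.eq_of_subset_of_subset
      · intro x hx
        rcases eq_or_ne x a with rfl | hxa
        · exact Set.mem_insert _ _
        · rcases eq_or_ne x b with rfl | hxb
          · exact Set.mem_insert_of_mem _ rfl
          · exact absurd (h x hx hxa) hxb
      · intro x hx
        simp only [Set.mem_insert_iff, Set.mem_singleton_iff] at hx
        rcases hx with rfl | rfl <;> assumption
    obtain ⟨c, hc, hca, hcb⟩ := hex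
    obtain ⟨d, hd⟩ : ∃ d, d ∉ Y := by
      by_contra h
      push_neg at h
      exact hYX (Set.eq_univ_iff_forall.mpr h)
    have hda : a ≠ d := fun h => hd (h ▸ ha)
    have hdb : b ≠ d := fun h => hd (h ▸ hb)
    have hdc : c ≠ d := fun h => hd (h ▸ hc)
    set α : X → X := fun x => if x = d then c else if x = a then a else b with hαdef
    set β : X → X := fun x => if x = d then c else if x = a ∨ x = b then a else b with hβdef
    set γ : X → X := fun x => if x ∈ Y then x else a with hγdef
    set η₀ : X → X := fun x => if x ∈ Y ∧ ¬ x = a ∧ ¬ x = b then c else a with hη₀def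
    -- values
    have hαd : α d = c := by simp [hαdef]
    have hαa : α a = a := by simp [hαdef, hda]
    have hαb : α b = b := by simp [hαdef, hdb, (Ne.symm hab)]
    have hβd : β d = c := by simp [hβdef]
    have hβa : β a = a := by simp [hβdef, hda]
    have hβb : β b = a := by simp [hβdef, hdb]
    have hβc2 : β c = b := by simp [hβdef, hdc, hca, hcb]
    have hγY : ∀ x, x ∈ Y → γ x = x := fun x hx => by simp [hγdef, hx]
    have hγn : ∀ x, x ∉ Y → γ x = a := fun x hx => by simp [hγdef, hx]
    -- ranges
    have hαr : Set.range α ⊆ Y := by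
      rintro _ ⟨x, rfl⟩
      simp only [hαdef]
      split_ifs <;> assumption
    have hβr : Set.range β ⊆ Y := by
      rintro _ ⟨x, rfl⟩
      simp only [hβdef]
      split_ifs <;> assumption
    have hγr : Set.range γ ⊆ Y := by
      rintro _ ⟨x, rfl⟩
      simp only [hγdef]
      split_ifs <;> assumption
    have hη₀r : Set.range η₀ ⊆ Y := by
      rintro _ ⟨x, rfl⟩
      simp only [hη₀def]
      split_ifs <;> assumption
    -- η₀ values and idempotency
    have hη₀a : η₀ a = a := by simp [hη₀def]
    have hη₀b : η₀ b = a := by simp [hη₀def]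
    have hη₀c : η₀ c = c := by simp [hη₀def, hc, hca, hcb]
    have hη₀i : η₀ ∘ η₀ = η₀ := by
      funext x
      by_cases h : x ∈ Y ∧ ¬ x = a ∧ ¬ x = b
      · have : η₀ x = c := by simp [hη₀def, h]
        simp only [Function.comp_apply, this, hη₀c]
      · have : η₀ x = a := by simp only [hη₀def]; rw [if_neg h]
        simp only [Function.comp_apply, this, hη₀a]
    -- no idempotent fixes α (resp. β) on the right
    have hRα : ∀ η : X → X, Set.range η ⊆ Y → η ∘ η = η → ¬ (α ∘ η = α) := by
      intro η hηr _ hcontra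
      have h1 : α (η d) = α d := congrFun hcontra d
      have hηd : η d ∈ Y := hηr ⟨d, rfl⟩
      have hηdd : ¬ (η d = d) := fun h => hd (h ▸ hηd)
      rw [hαd] at h1
      simp only [hαdef] at h1
      rw [if_neg hηdd] at h1
      split_ifs at h1
      · exact hca h1.symm
      · exact hcb h1.symm
    have hRβ : ∀ η : X → X, Set.range η ⊆ Y → η ∘ η = η → ¬ (β ∘ η = β) := by
      intro η hηr _ hcontra
      have h1 : β (η d) = β d := congrFun hcontra d
      have hηd : η d ∈ Y := hηr ⟨d, rfl⟩
      have hηdd : ¬ (η d = d) := fun h => hd (h ▸ hηd)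
      rw [hβd] at h1
      simp only [hβdef] at h1
      rw [if_neg hηdd] at h1
      split_ifs at h1
      · exact hca h1.symm
      · exact hcb h1.symm
    have hiff := H α β γ hαr hβr hγr
      (fun η h1 h2 => iff_of_false (hRα η h1 h2) (hRβ η h1 h2)) η₀ hη₀r hη₀i
    -- the β-side holds
    have hRHS : (β ∘ γ) ∘ η₀ = β ∘ γ := by
      funext x
      simp only [Function.comp_apply]
      by_cases h : x ∈ Y ∧ ¬ x = a ∧ ¬ x = b
      · have hx : η₀ x = c := by simp [hη₀def, h]
        rw [hx, hγY c hc, hβc2, hγY x h.1]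
        have : ¬ (x = d) := fun hh => hd (hh ▸ h.1)
        simp only [hβdef]
        rw [if_neg this, if_neg (by push_neg; exact ⟨h.2.1, h.2.2⟩)]
      · have hx : η₀ x = a := by simp only [hη₀def]; rw [if_neg h]
        rw [hx, hγY a ha, hβa]
        push_neg at h
        by_cases hxY : x ∈ Y
        · rcases (show x = a ∨ x = b by tauto) with h' | h'
          · rw [h', hγY a ha, hβa]
          · rw [h', hγY b hb, hβb]
        · rw [hγn x hxY, hβa]
    -- but the α-side fails
    have hLHS := hiff.mpr hRHS
    have h1 : α (γ (η₀ b)) = α (γ b) := congrFun hLHS b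
    rw [hη₀b, hγY a ha, hαa, hγY b hb, hαb] at h1
    exact hab h1
  · rintro ⟨a, b, hab, rfl⟩
    intro α β γ hα hβ hγ H η hηr hηi
    have hmem : ∀ {x : X}, x ∈ ({a, b} : Set X) → x = a ∨ x = b := by
      intro x hx
      simpa using hx
    have hαv : ∀ z, α z = a ∨ α z = b := fun z => hmem (hα ⟨z, rfl⟩)
    have hβv : ∀ z, β z = a ∨ β z = b := fun z => hmem (hβ ⟨z, rfl⟩)
    have hγv : ∀ z, γ z = a ∨ γ z = b := fun z => hmem (hγ ⟨z, rfl⟩)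
    by_cases hc : α a = α b
    · have hβc : β a = β b := aux_const hab hβv H hc
      have hA : ∀ u, u = a ∨ u = b → α u = α a := by
        rintro u (rfl | rfl)
        · rfl
        · exact hc.symm
      have hB : ∀ u, u = a ∨ u = b → β u = β a := by
        rintro u (rfl | rfl)
        · rfl
        · exact hβc.symm
      constructor
      · intro _
        funext x
        simp only [Function.comp_apply]
        rw [hB _ (hγv _), hB _ (hγv _)]
      · intro _
        funext x
        simp only [Function.comp_apply]
        rw [hA _ (hγv _), hA _ (hγv _)]
    · have hβc : ¬ (β a = β b) := fun h =>
        hc (aux_const hab hαv (fun η' h1 h2 => (H η' h1 h2).symm) h)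
      have hAinj : ∀ u v, u = a ∨ u = b → v = a ∨ v = b → α u = α v → u = v := by
        rintro u v (rfl | rfl) (rfl | rfl) h
        · rfl
        · exact absurd h hc
        · exact absurd h.symm hc
        · rfl
      have hBinj : ∀ u v, u = a ∨ u = b → v = a ∨ v = b → β u = β v → u = v := by
        rintro u v (rfl | rfl) (rfl | rfl) h
        · rfl
        · exact absurd h hβc
        · exact absurd h.symm hβc
        · rfl
      constructor
      · intro h
        funext x
        have h1 : α (γ (η x)) = α (γ x) := congrFun h x
        have h2 : γ (η x) = γ x := hAinj _ _ (hγv _) (hγv _) h1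
        simp only [Function.comp_apply]
        rw [h2]
      · intro h
        funext x
        have h1 : β (γ (η x)) = β (γ x) := congrFun h x
        have h2 : γ (η x) = γ x := hBinj _ _ (hγv _) (hγv _) h1
        simp only [Function.comp_apply]
        rw [h2]
end

section
/- Let X be a set and Y a proper subset of X with at least two elements, and let Q = {α ∈ T(X,Y) : α(X) ⊆ α(Y)}. For α, β ∈ T(X,Y), there exists γ ∈ T(X,Y) with α 𝓛* γ and γ 𝓡* β if and only if one of the following holds: (1) β ∈ Q and |α(X)| = |β(X)|; (2) β ∉ Q, |β(Y)| = |α(X)|, and |β(Y)| is infinite; (3) β ∉ Q and |β(Y)| < |α(X)| ≤ |β(Y)| + |X \ Y| (cardinal arithmetic). -/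
/-- Membership in `T(X,Y)¹ = T(X,Y) ∪ {id}`. -/
def inT1 {X : Type*} (Y : Set X) (γ : X → X) : Prop :=
  Set.range γ ⊆ Y ∨ γ = id

/-- The relation `𝓛*` on `T(X,Y)` (multiplication `α·β := β ∘ α`, so `α·γ = γ ∘ α`). -/
def Lstar {X : Type*} (Y : Set X) (α β : X → X) : Prop :=
  ∀ γ δ : X → X, inT1 Y γ → inT1 Y δ → ((γ ∘ α = δ ∘ α) ↔ (γ ∘ β = δ ∘ β))

/-- The relation `𝓡*` on `T(X,Y)` (`γ·α = α ∘ γ`). -/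
def Rstar {X : Type*} (Y : Set X) (α β : X → X) : Prop :=
  ∀ γ δ : X → X, inT1 Y γ → inT1 Y δ → ((α ∘ γ = α ∘ δ) ↔ (β ∘ γ = β ∘ δ))

section Aux

open Set Cardinal

variable {X : Type*} {Y : Set X}

/-- If two maps have the same kernel, their ranges are equinumerous. -/
lemma mk_range_eq_of_ker {W : Type*} (f g : W → X)
    (h : ∀ a b, f a = f b ↔ g a = g b) :
    Cardinal.mk (Set.range f) = Cardinal.mk (Set.range g) := by
  apply Cardinal.mk_congr
  refine Equiv.ofBijective (fun p => ⟨g p.2.choose, Set.mem_range_self _⟩) ⟨?_, ?_⟩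
  · intro p q hpq
    apply Subtype.ext
    have h1 : f p.2.choose = (p : X) := p.2.choose_spec
    have h2 : f q.2.choose = (q : X) := q.2.choose_spec
    have h3 : g p.2.choose = g q.2.choose := by
      simpa using congrArg Subtype.val hpq
    rw [← h1, ← h2]
    exact (h _ _).2 h3
  · rintro ⟨_, w, rfl⟩
    refine ⟨⟨f w, Set.mem_range_self w⟩, ?_⟩
    apply Subtype.ext
    have h1 : f (Set.mem_range_self (f := f) w).choose = f w :=
      (Set.mem_range_self (f := f) w).choose_spec
    exact (h _ _).1 h1

lemma lstar_of_range_eq {α γ : X → X} (h : Set.range α = Set.range γ) :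
    Lstar Y α γ := by
  intro u v _ _
  constructor <;> intro huv <;> funext x
  · have hx : γ x ∈ Set.range α := by rw [h]; exact Set.mem_range_self x
    obtain ⟨x', hx'⟩ := hx
    have := congrFun huv x'
    simpa [hx'] using this
  · have hx : α x ∈ Set.range γ := by rw [← h]; exact Set.mem_range_self x
    obtain ⟨x', hx'⟩ := hx
    have := congrFun huv x'
    simpa [hx'] using this

lemma lstar_symm {α γ : X → X} (h : Lstar Y α γ) : Lstar Y γ α :=
  fun u v hu hv => (h u v hu hv).symm

lemma rstar_symm {α γ : X → X} (h : Rstar Y α γ) : Rstar Y γ α :=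
  fun u v hu hv => (h u v hu hv).symm

lemma range_subset_of_lstar (hY : Y.Nontrivial) {α γ : X → X}
    (h : Lstar Y α γ) : Set.range α ⊆ Set.range γ := by
  classical
  rintro p ⟨x0, rfl⟩
  by_contra hp
  obtain ⟨a, ha, b, hb, hab⟩ := hY
  set u : X → X := fun _ => a with hu_def
  set v : X → X := fun z => if z = α x0 then b else a with hv_def
  have hu : inT1 Y u := Or.inl (by rintro _ ⟨x, rfl⟩; exact ha)
  have hv : inT1 Y v := Or.inl (by
    rintro _ ⟨x, rfl⟩
    simp only [hv_def]
    split <;> assumption)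
  have hγ : u ∘ γ = v ∘ γ := by
    funext z
    simp only [Function.comp, hu_def, hv_def]
    rw [if_neg]
    intro hzz
    exact hp ⟨z, hzz⟩
  have h2 := (h u v hu hv).2 hγ
  have h3 : a = b := by simpa [hu_def, hv_def, Function.comp] using congrFun h2 x0
  exact hab h3

lemma ker_on_Y_of_rstar {γ β : X → X} (h : Rstar Y γ β) {y1 y2 : X}
    (h1 : y1 ∈ Y) (h2 : y2 ∈ Y) : (γ y1 = γ y2 ↔ β y1 = β y2) := by
  have hu : inT1 Y (fun _ : X => y1) := Or.inl (by rintro _ ⟨x, rfl⟩; exact h1)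
  have hv : inT1 Y (fun _ : X => y2) := Or.inl (by rintro _ ⟨x, rfl⟩; exact h2)
  have key := h _ _ hu hv
  have e1 : (γ ∘ (fun _ : X => y1) = γ ∘ fun _ : X => y2) ↔ γ y1 = γ y2 :=
    ⟨fun hh => congrFun hh y1, fun hh => funext fun _ => hh⟩
  have e2 : (β ∘ (fun _ : X => y1) = β ∘ fun _ : X => y2) ↔ β y1 = β y2 :=
    ⟨fun hh => congrFun hh y1, fun hh => funext fun _ => hh⟩
  exact e1.symm.trans (key.trans e2)

lemma q_of_rstar {γ β : X → X} (h : Rstar Y γ β)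
    (hQ : Set.range β ⊆ β '' Y) : Set.range γ ⊆ γ '' Y := by
  classical
  have hch : ∀ x : X, ∃ y, y ∈ Y ∧ β y = β x := by
    intro x
    obtain ⟨y, hy, hyx⟩ := hQ (Set.mem_range_self x)
    exact ⟨y, hy, hyx⟩
  choose u hu1 hu2 using hch
  have huT : inT1 Y u := Or.inl (by rintro _ ⟨x, rfl⟩; exact hu1 x)
  have hβu : β ∘ u = β ∘ id := funext fun x => hu2 x
  have hγu : γ ∘ u = γ ∘ id := (h u id huT (Or.inr rfl)).2 hβu
  rintro _ ⟨x, rfl⟩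
  exact ⟨u x, hu1 x, congrFun hγu x⟩

lemma ker_of_rstar_q {γ β : X → X} (h : Rstar Y γ β)
    (hQβ : Set.range β ⊆ β '' Y) (hQγ : Set.range γ ⊆ γ '' Y) :
    ∀ x1 x2, γ x1 = γ x2 ↔ β x1 = β x2 := by
  classical
  have hchβ : ∀ x : X, ∃ y, y ∈ Y ∧ β y = β x := by
    intro x
    obtain ⟨y, hy, hyx⟩ := hQβ (Set.mem_range_self x)
    exact ⟨y, hy, hyx⟩
  have hchγ : ∀ x : X, ∃ y, y ∈ Y ∧ γ y = γ x := by
    intro x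
    obtain ⟨y, hy, hyx⟩ := hQγ (Set.mem_range_self x)
    exact ⟨y, hy, hyx⟩
  choose u hu1 hu2 using hchβ
  choose w hw1 hw2 using hchγ
  have huT : inT1 Y u := Or.inl (by rintro _ ⟨x, rfl⟩; exact hu1 x)
  have hwT : inT1 Y w := Or.inl (by rintro _ ⟨x, rfl⟩; exact hw1 x)
  have hγu : γ ∘ u = γ ∘ id := (h u id huT (Or.inr rfl)).2 (funext fun x => hu2 x)
  have hβw : β ∘ w = β ∘ id := (h w id hwT (Or.inr rfl)).1 (funext fun x => hw2 x)
  intro x1 x2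
  constructor
  · intro hg
    have hww : γ (w x1) = γ (w x2) := by rw [hw2 x1, hw2 x2, hg]
    have hbw : β (w x1) = β (w x2) :=
      (ker_on_Y_of_rstar h (hw1 x1) (hw1 x2)).1 hww
    have e1 : β (w x1) = β x1 := congrFun hβw x1
    have e2 : β (w x2) = β x2 := congrFun hβw x2
    rw [← e1, ← e2, hbw]
  · intro hb
    have huu : β (u x1) = β (u x2) := by rw [hu2 x1, hu2 x2, hb]
    have hgu : γ (u x1) = γ (u x2) :=
      (ker_on_Y_of_rstar h (hu1 x1) (hu1 x2)).2 huu
    have e1 : γ (u x1) = γ x1 := congrFun hγu x1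
    have e2 : γ (u x2) = γ x2 := congrFun hγu x2
    rw [← e1, ← e2, hgu]

lemma rstar_of_ker {γ β : X → X}
    (h : ∀ x1 x2, γ x1 = γ x2 ↔ β x1 = β x2) : Rstar Y γ β := by
  intro u v _ _
  constructor <;> intro hh <;> funext x
  · exact (h (u x) (v x)).1 (congrFun hh x)
  · exact (h (u x) (v x)).2 (congrFun hh x)

lemma rstar_of_notQ {γ β : X → X}
    (hkerY : ∀ ⦃y1 y2 : X⦄, y1 ∈ Y → y2 ∈ Y → (γ y1 = γ y2 ↔ β y1 = β y2))
    (hγ : ¬ Set.range γ ⊆ γ '' Y) (hβ : ¬ Set.range β ⊆ β '' Y) :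
    Rstar Y γ β := by
  intro u v hu hv
  rcases hu with hu | rfl <;> rcases hv with hv | rfl
  · constructor <;> intro hh <;> funext x
    · exact (hkerY (hu (Set.mem_range_self x)) (hv (Set.mem_range_self x))).1
        (congrFun hh x)
    · exact (hkerY (hu (Set.mem_range_self x)) (hv (Set.mem_range_self x))).2
        (congrFun hh x)
  · constructor <;> intro hh <;> exfalso
    · exact hγ (by rintro _ ⟨x, rfl⟩; exact ⟨u x, hu (Set.mem_range_self x),
        congrFun hh x⟩)
    · exact hβ (by rintro _ ⟨x, rfl⟩; exact ⟨u x, hu (Set.mem_range_self x),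
        congrFun hh x⟩)
  · constructor <;> intro hh <;> exfalso
    · exact hγ (by rintro _ ⟨x, rfl⟩; exact ⟨v x, hv (Set.mem_range_self x),
        (congrFun hh x).symm⟩)
    · exact hβ (by rintro _ ⟨x, rfl⟩; exact ⟨v x, hv (Set.mem_range_self x),
        (congrFun hh x).symm⟩)
  · simp

/-- Construction of an element with prescribed range, prescribed kernel on `Y`,
which is not in `Q`. -/
lemma construct_gamma {α β : X → X} (hα : Set.range α ⊆ Y) (B : Set X)
    (hBA : B ⊆ Set.range α) (hB : Nonempty (↥(β '' Y) ≃ ↥B))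
    (hCne : (Set.range α \ B).Nonempty)
    (hCle : Cardinal.mk ↥(Set.range α \ B) ≤ Cardinal.mk ↥(Set.univ \ Y)) :
    ∃ γ : X → X, Set.range γ ⊆ Y ∧ Set.range γ = Set.range α ∧
      (∀ ⦃y1 y2 : X⦄, y1 ∈ Y → y2 ∈ Y → (γ y1 = γ y2 ↔ β y1 = β y2)) ∧
      ¬ Set.range γ ⊆ γ '' Y := by
  classical
  obtain ⟨e⟩ := hB
  have hne : Nonempty ↥(Set.range α \ B) := hCne.to_subtype
  obtain ⟨f⟩ := (Cardinal.le_def _ _).1 hCle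
  set g : ↥(Set.univ \ Y) → ↥(Set.range α \ B) := Function.invFun f with hg_def
  have hgsurj : Function.Surjective g := fun c =>
    ⟨f c, Function.leftInverse_invFun f.injective c⟩
  set γ : X → X := fun x =>
    if hx : x ∈ Y then ↑(e ⟨β x, Set.mem_image_of_mem β hx⟩)
    else ↑(g ⟨x, ⟨Set.mem_univ x, hx⟩⟩) with hγ_def
  have himgY : γ '' Y ⊆ B := by
    rintro _ ⟨y, hy, rfl⟩
    simp only [hγ_def, dif_pos hy]
    exact (e _).2
  have hrange : Set.range γ = Set.range α := by
    apply subset_antisymm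
    · rintro _ ⟨x, rfl⟩
      simp only [hγ_def]
      split_ifs with hx
      · exact hBA (e _).2
      · exact (g _).2.1
    · intro p hp
      by_cases hpB : p ∈ B
      · obtain ⟨q, hq⟩ := e.surjective ⟨p, hpB⟩
        obtain ⟨y, hy, hyp⟩ := q.2
        refine ⟨y, ?_⟩
        simp only [hγ_def, dif_pos hy]
        have hqq : (⟨β y, Set.mem_image_of_mem β hy⟩ : ↥(β '' Y)) = q :=
          Subtype.ext hyp
        rw [hqq, hq]
      · obtain ⟨d, hd⟩ := hgsurj ⟨p, hp, hpB⟩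
        refine ⟨d.1, ?_⟩
        have hdY : d.1 ∉ Y := d.2.2
        simp only [hγ_def, dif_neg hdY]
        have hdd : (⟨d.1, ⟨Set.mem_univ _, hdY⟩⟩ : ↥(Set.univ \ Y)) = d :=
          Subtype.ext rfl
        rw [hdd, hd]
  refine ⟨γ, ?_, hrange, ?_, ?_⟩
  · rw [hrange]; exact hα
  · intro y1 y2 hy1 hy2
    simp only [hγ_def, dif_pos hy1, dif_pos hy2]
    constructor
    · intro hx
      have := e.injective (Subtype.coe_injective hx)
      exact congrArg Subtype.val this
    · intro hb
      exact congrArg (fun q : ↥(β '' Y) => (e q : X)) (Subtype.ext hb)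
  · intro hsub
    obtain ⟨c, hc⟩ := hCne
    have hcr : c ∈ Set.range γ := by rw [hrange]; exact hc.1
    exact hc.2 (himgY (hsub hcr))

end Aux

open Set Cardinal in
/-- Let `X` be a set, `Y` a proper subset of `X` with at least two
elements, and `Q = {α ∈ T(X,Y) : α(X) ⊆ α(Y)}`. For `α, β ∈ T(X,Y)`:
`α (𝓛* ∘ 𝓡*) β` iff (1) `β ∈ Q` and `|α(X)| = |β(X)|`; or (2) `β ∉ Q`,
`|β(Y)| = |α(X)|` and `|β(Y)|` is infinite; or (3) `β ∉ Q` and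
`|β(Y)| < |α(X)| ≤ |β(Y)| + |X \ Y|`. -/
theorem LstarRstar_in_TXY {X : Type*} (Y : Set X) (hY : Y.Nontrivial)
    (hYX : Y ≠ Set.univ) (α β : X → X)
    (hα : Set.range α ⊆ Y) (hβ : Set.range β ⊆ Y) :
    (∃ γ : X → X, Set.range γ ⊆ Y ∧ Lstar Y α γ ∧ Rstar Y γ β) ↔
    ((Set.range β ⊆ β '' Y ∧
        Cardinal.mk (Set.range α) = Cardinal.mk (Set.range β)) ∨
      (¬ Set.range β ⊆ β '' Y ∧
        Cardinal.mk (β '' Y) = Cardinal.mk (Set.range α) ∧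
        Cardinal.aleph0 ≤ Cardinal.mk (β '' Y)) ∨
      (¬ Set.range β ⊆ β '' Y ∧
        Cardinal.mk (β '' Y) < Cardinal.mk (Set.range α) ∧
        Cardinal.mk (Set.range α) ≤
          Cardinal.mk (β '' Y) + Cardinal.mk ↥(Set.univ \ Y))) := by
  classical
  have hXYne : ∃ x0 : X, x0 ∉ Y := by
    by_contra h
    push_neg at h
    exact hYX (Set.eq_univ_of_forall h)
  have hμpos : (1 : Cardinal) ≤ Cardinal.mk ↥(Set.univ \ Y) := by
    obtain ⟨x0, hx0⟩ := hXYne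
    rw [Cardinal.one_le_iff_ne_zero, Cardinal.mk_ne_zero_iff]
    exact ⟨⟨x0, Set.mem_univ x0, hx0⟩⟩
  constructor
  · rintro ⟨γ, hγY, hL, hR⟩
    have hrange : Set.range α = Set.range γ :=
      subset_antisymm (range_subset_of_lstar hY hL)
        (range_subset_of_lstar hY (lstar_symm hL))
    have hmkr : Cardinal.mk (Set.range α) = Cardinal.mk (Set.range γ) := by
      rw [hrange]
    by_cases hQ : Set.range β ⊆ β '' Y
    · left
      refine ⟨hQ, ?_⟩
      have hQγ : Set.range γ ⊆ γ '' Y := q_of_rstar hR hQ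
      have hker := ker_of_rstar_q hR hQ hQγ
      rw [hmkr]
      exact mk_range_eq_of_ker γ β hker
    · have hQγ : ¬ Set.range γ ⊆ γ '' Y := fun hq =>
        hQ (q_of_rstar (rstar_symm hR) hq)
      have hYimg : Cardinal.mk (β '' Y) = Cardinal.mk (γ '' Y) := by
        rw [Set.image_eq_range, Set.image_eq_range]
        exact mk_range_eq_of_ker _ _
          (fun a b => (ker_on_Y_of_rstar hR a.2 b.2).symm)
      have hsubset : γ '' Y ⊆ Set.range γ := Set.image_subset_range γ Y
      obtain ⟨p, hpr, hpY⟩ := Set.not_subset.mp hQγ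
      have hle : Cardinal.mk (Set.range γ) ≤
          Cardinal.mk (γ '' Y) + Cardinal.mk ↥(Set.univ \ Y) := by
        have hdecomp : Set.range γ = γ '' Y ∪ γ '' (Set.univ \ Y) := by
          rw [← Set.image_union, Set.union_diff_cancel (Set.subset_univ Y),
            Set.image_univ]
        rw [hdecomp]
        exact (Cardinal.mk_union_le _ _).trans
          (add_le_add le_rfl Cardinal.mk_image_le)
      by_cases hlt : Cardinal.mk (β '' Y) < Cardinal.mk (Set.range α)
      · right; right
        refine ⟨hQ, hlt, ?_⟩
        rw [hmkr, hYimg]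
        exact hle
      · right; left
        have h1 : Cardinal.mk (β '' Y) ≤ Cardinal.mk (Set.range α) := by
          rw [hmkr, hYimg]
          exact Cardinal.mk_le_mk_of_subset hsubset
        have heq : Cardinal.mk (β '' Y) = Cardinal.mk (Set.range α) :=
          le_antisymm h1 (not_lt.mp hlt)
        refine ⟨hQ, heq, ?_⟩
        by_contra hfin
        push_neg at hfin
        have hmkeq : Cardinal.mk (γ '' Y) = Cardinal.mk (Set.range γ) := by
          rw [← hYimg, heq, hmkr]
        have hfinY : Cardinal.mk (γ '' Y) < Cardinal.aleph0 := by
          rw [← hYimg]; exact hfin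
        have hins : insert p (γ '' Y) ⊆ Set.range γ := by
          rw [Set.insert_subset_iff]; exact ⟨hpr, hsubset⟩
        have h2 : Cardinal.mk (γ '' Y) + 1 ≤ Cardinal.mk (Set.range γ) := by
          rw [← Cardinal.mk_insert hpY]
          exact Cardinal.mk_le_mk_of_subset hins
        rw [← hmkeq] at h2
        obtain ⟨n, hn⟩ := Cardinal.lt_aleph0.1 hfinY
        rw [hn] at h2
        have : ((n + 1 : ℕ) : Cardinal.{u_1}) ≤ (n : Cardinal.{u_1}) := by
          simpa using h2
        rw [Nat.cast_le] at this
        omega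
  · intro hcase
    rcases hcase with ⟨hQ, hcard⟩ | ⟨hQ, hcard, hinf⟩ | ⟨hQ, hlt, hle⟩
    · -- Case (1): build γ with the same kernel as β and range equal to range α.
      obtain ⟨e⟩ := Cardinal.eq.1 hcard.symm
      refine ⟨fun x => ↑(e ⟨β x, Set.mem_range_self x⟩), ?_, ?_, ?_⟩
      · rintro _ ⟨x, rfl⟩
        exact hα (e _).2
      · apply lstar_of_range_eq
        apply subset_antisymm
        · rintro _ ⟨x, rfl⟩
          obtain ⟨q, hq⟩ := e.surjective ⟨α x, Set.mem_range_self x⟩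
          obtain ⟨x', hx'⟩ := q.2
          refine ⟨x', ?_⟩
          show ↑(e ⟨β x', Set.mem_range_self x'⟩) = α x
          have hqq : (⟨β x', Set.mem_range_self x'⟩ : ↥(Set.range β)) = q :=
            Subtype.ext hx'
          rw [hqq, hq]
        · rintro _ ⟨x, rfl⟩
          exact (e _).2
      · apply rstar_of_ker
        intro x1 x2
        constructor
        · intro hg
          have := e.injective (Subtype.coe_injective hg)
          exact congrArg Subtype.val this
        · intro hb
          exact congrArg (fun q : ↥(Set.range β) => (e q : X)) (Subtype.ext hb)
    · -- Case (2): |β''Y| = |range α| infinite.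
      have hAinf : Cardinal.aleph0 ≤ Cardinal.mk (Set.range α) := hcard ▸ hinf
      have hAne : Nonempty ↥(Set.range α) := by
        rw [← Cardinal.mk_ne_zero_iff]
        intro h0
        rw [h0] at hAinf
        exact Cardinal.aleph0_ne_zero (le_zero_iff.1 hAinf)
      obtain ⟨⟨a0, ha0⟩⟩ := hAne
      set B : Set X := Set.range α \ {a0} with hB_def
      have hBA : B ⊆ Set.range α := Set.diff_subset
      have hsing : {a0} ⊆ Set.range α := Set.singleton_subset_iff.2 ha0
      have hsum : Cardinal.mk ↥B + 1 = Cardinal.mk (Set.range α) := by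
        have := Cardinal.mk_diff_add_mk hsing
        rwa [Cardinal.mk_singleton] at this
      have hBinf : Cardinal.aleph0 ≤ Cardinal.mk ↥B := by
        by_contra hb
        push_neg at hb
        have hlt2 : Cardinal.mk (Set.range α) < Cardinal.aleph0 := by
          rw [← hsum]
          exact Cardinal.add_lt_aleph0 hb Cardinal.one_lt_aleph0
        exact absurd hAinf (not_le.2 hlt2)
      have hBcard : Cardinal.mk ↥(β '' Y) = Cardinal.mk ↥B := by
        rw [hcard, ← hsum, Cardinal.add_one_eq hBinf]
      have hdiff : Set.range α \ B = {a0} := by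
        rw [hB_def, Set.diff_diff_right_self,
          Set.inter_eq_self_of_subset_right hsing]
      have hCne : (Set.range α \ B).Nonempty := by
        rw [hdiff]; exact ⟨a0, rfl⟩
      have hCle : Cardinal.mk ↥(Set.range α \ B) ≤ Cardinal.mk ↥(Set.univ \ Y) := by
        rw [hdiff, Cardinal.mk_singleton]
        exact hμpos
      obtain ⟨γ, hγY, hγrange, hγker, hγQ⟩ :=
        construct_gamma hα B hBA (Cardinal.eq.1 hBcard) hCne hCle
      exact ⟨γ, hγY, lstar_of_range_eq hγrange.symm, rstar_of_notQ hγker hγQ hQ⟩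
    · -- Case (3): |β''Y| < |range α| ≤ |β''Y| + |X \ Y|.
      obtain ⟨B, hBA, hB⟩ := Cardinal.le_mk_iff_exists_subset.1 hlt.le
      have hCsum : Cardinal.mk ↥(Set.range α \ B) + Cardinal.mk ↥B =
          Cardinal.mk (Set.range α) := Cardinal.mk_diff_add_mk hBA
      have hCne : (Set.range α \ B).Nonempty := by
        rw [Set.nonempty_iff_ne_empty]
        intro hemp
        rw [Set.diff_eq_empty] at hemp
        have heq2 : Cardinal.mk ↥B = Cardinal.mk (Set.range α) :=
          le_antisymm (Cardinal.mk_le_mk_of_subset hBA)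
            (Cardinal.mk_le_mk_of_subset hemp)
        rw [hB] at heq2
        exact hlt.ne heq2
      have hCle : Cardinal.mk ↥(Set.range α \ B) ≤ Cardinal.mk ↥(Set.univ \ Y) := by
        by_cases hκ : Cardinal.mk ↥(β '' Y) < Cardinal.aleph0
        · have h2 : Cardinal.mk ↥(Set.range α \ B) + Cardinal.mk ↥(β '' Y) ≤
              Cardinal.mk ↥(Set.univ \ Y) + Cardinal.mk ↥(β '' Y) :=
            calc Cardinal.mk ↥(Set.range α \ B) + Cardinal.mk ↥(β '' Y)
                = Cardinal.mk (Set.range α) := by rw [← hB]; exact hCsum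
              _ ≤ Cardinal.mk ↥(β '' Y) + Cardinal.mk ↥(Set.univ \ Y) := hle
              _ = Cardinal.mk ↥(Set.univ \ Y) + Cardinal.mk ↥(β '' Y) :=
                  add_comm _ _
          exact (Cardinal.add_le_add_iff_of_lt_aleph0 hκ).1 h2
        · push_neg at hκ
          have hmax : Cardinal.mk ↥(β '' Y) + Cardinal.mk ↥(Set.univ \ Y) =
              max (Cardinal.mk ↥(β '' Y)) (Cardinal.mk ↥(Set.univ \ Y)) :=
            Cardinal.add_eq_max hκ
          have haμ : Cardinal.mk (Set.range α) ≤
              max (Cardinal.mk ↥(β '' Y)) (Cardinal.mk ↥(Set.univ \ Y)) := by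
            rw [← hmax]; exact hle
          have haμ2 : Cardinal.mk (Set.range α) ≤ Cardinal.mk ↥(Set.univ \ Y) := by
            by_contra hh
            push_neg at hh
            exact absurd haμ (not_le.2 (max_lt hlt hh))
          exact (Cardinal.mk_le_mk_of_subset Set.diff_subset).trans haμ2
      obtain ⟨γ, hγY, hγrange, hγker, hγQ⟩ :=
        construct_gamma hα B hBA (Cardinal.eq.1 hB.symm) hCne hCle
      exact ⟨γ, hγY, lstar_of_range_eq hγrange.symm, rstar_of_notQ hγker hγQ hQ⟩
end

section
/- Let X be a set and Y a proper subset of X with at least two elements. Let 𝓓* denote the smallest equivalence relation on T(X,Y) containing both 𝓛* and 𝓡* (their join). For α, β ∈ T(X,Y), α 𝓓* β if and only if one of the following holds: (I) |X \ Y| = 1 and |α(X)| = |β(X)|; (II) 2 ≤ |X \ Y| < ℵ₀ and (either both 1 < |α(X)| < ℵ₀ and 1 < |β(X)| < ℵ₀, or |α(X)| = |β(X)|); (III) |X \ Y| is infinite and (either both 1 < |α(X)| ≤ |X \ Y| and 1 < |β(X)| ≤ |X \ Y|, or |α(X)| = |β(X)|). -/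
/-- The relation `𝓛*` on `T(X,Y)`, with membership in `T(X,Y)` built in
(multiplication `α·β := β ∘ α`, so `α·γ = γ ∘ α`). -/
def LstarT {X : Type*} (Y : Set X) (α β : X → X) : Prop :=
  Set.range α ⊆ Y ∧ Set.range β ⊆ Y ∧
    ∀ γ δ : X → X, inT1 Y γ → inT1 Y δ → ((γ ∘ α = δ ∘ α) ↔ (γ ∘ β = δ ∘ β))

/-- The relation `𝓡*` on `T(X,Y)`, with membership in `T(X,Y)` built in
(`γ·α = α ∘ γ`). -/
def RstarT {X : Type*} (Y : Set X) (α β : X → X) : Prop :=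
  Set.range α ⊆ Y ∧ Set.range β ⊆ Y ∧
    ∀ γ δ : X → X, inT1 Y γ → inT1 Y δ → ((α ∘ γ = α ∘ δ) ↔ (β ∘ γ = β ∘ δ))


section Aux
attribute [local instance] Classical.propDecidable
variable {X : Type*} {Y : Set X} {α β : X → X}

variable {X : Type*} {Y : Set X} {α β : X → X}

lemma comp_eq_iff_range {γ δ α : X → X} :
    γ ∘ α = δ ∘ α ↔ ∀ t ∈ Set.range α, γ t = δ t := by
  constructor
  · rintro h t ⟨x, rfl⟩; exact congrFun h x
  · intro h; funext x; exact h (α x) ⟨x, rfl⟩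

lemma lstar_of_range_eq_s18 (hα : Set.range α ⊆ Y) (hβ : Set.range β ⊆ Y)
    (h : Set.range α = Set.range β) : LstarT Y α β := by
  refine ⟨hα, hβ, fun γ δ _ _ => ?_⟩
  rw [comp_eq_iff_range, comp_eq_iff_range, h]

lemma rstar_of_ker_s18 (hα : Set.range α ⊆ Y) (hβ : Set.range β ⊆ Y)
    (h : ∀ x x', α x = α x' ↔ β x = β x') : RstarT Y α β := by
  refine ⟨hα, hβ, fun γ δ _ _ => ?_⟩
  constructor
  · intro hc; funext x; exact (h _ _).mp (congrFun hc x)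
  · intro hc; funext x; exact (h _ _).mpr (congrFun hc x)

/-- sufficient condition for `R*` via common deficiency -/
lemma rstar_of_def (hα : Set.range α ⊆ Y) (hβ : Set.range β ⊆ Y)
    (hYeq : ∀ y ∈ Y, α y = β y)
    (dα : ∃ x, ∀ y ∈ Y, α y ≠ α x) (dβ : ∃ x, ∀ y ∈ Y, β y ≠ β x) :
    RstarT Y α β := by
  refine ⟨hα, hβ, fun γ δ hγ hδ => ?_⟩
  have key : ∀ (g : X → X), Set.range g ⊆ Y → ¬ (α ∘ g = α) := by
    rintro g hg hc
    obtain ⟨x, hx⟩ := dα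
    exact hx (g x) (hg ⟨x, rfl⟩) (congrFun hc x)
  have keyβ : ∀ (g : X → X), Set.range g ⊆ Y → ¬ (β ∘ g = β) := by
    rintro g hg hc
    obtain ⟨x, hx⟩ := dβ
    exact hx (g x) (hg ⟨x, rfl⟩) (congrFun hc x)
  have keyid : ∀ (g : X → X), Set.range g ⊆ Y → ¬ (α = α ∘ g) ∧ ¬ (β = β ∘ g) := by
    intro g hg
    exact ⟨fun hc => key g hg hc.symm, fun hc => keyβ g hg hc.symm⟩
  rcases hγ with hγ | rfl <;> rcases hδ with hδ | rfl
  · constructor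
    · intro hc; funext x
      have := congrFun hc x
      simp only [Function.comp_apply] at this ⊢
      rw [← hYeq _ (hγ ⟨x, rfl⟩), ← hYeq _ (hδ ⟨x, rfl⟩)]; exact this
    · intro hc; funext x
      have := congrFun hc x
      simp only [Function.comp_apply] at this ⊢
      rw [hYeq _ (hγ ⟨x, rfl⟩), hYeq _ (hδ ⟨x, rfl⟩)]; exact this
  · simp only [Function.comp_id]
    exact iff_of_false (key γ hγ) (keyβ γ hγ)
  · simp only [Function.comp_id]
    exact iff_of_false ((keyid δ hδ).1) ((keyid δ hδ).2)
  · simp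
lemma rstar_symm_s18 (h : RstarT Y α β) : RstarT Y β α :=
  ⟨h.2.1, h.1, fun γ δ hγ hδ => (h.2.2 γ δ hγ hδ).symm⟩

lemma lstar_symm_s18 (h : LstarT Y α β) : LstarT Y β α :=
  ⟨h.2.1, h.1, fun γ δ hγ hδ => (h.2.2 γ δ hγ hδ).symm⟩

lemma const_inT1 {u : X} (hu : u ∈ Y) : inT1 Y (fun _ => u) :=
  Or.inl (by rintro t ⟨x, rfl⟩; exact hu)

/-- range inclusion under L*. -/
lemma lstar_range_subset (hY : Y.Nontrivial) (h : LstarT Y α β) :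
    Set.range α ⊆ Set.range β := by
  rintro t ⟨x₀, rfl⟩
  by_contra ht
  obtain ⟨u, hu, v, hv, huv⟩ := hY
  have hδ : inT1 Y (fun x => if x = α x₀ then v else u) :=
    Or.inl (by rintro s ⟨x, rfl⟩; dsimp only; split <;> assumption)
  have hiff := h.2.2 (fun _ => u) (fun x => if x = α x₀ then v else u) (const_inT1 hu) hδ
  have hbeta : (fun _ => u) ∘ β = (fun x => if x = α x₀ then v else u) ∘ β := by
    funext x
    have : β x ≠ α x₀ := fun hc => ht ⟨x, hc⟩
    simp [this]
  have := congrFun (hiff.mpr hbeta) x₀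
  simp at this
  exact huv this

lemma lstar_range_eq (hY : Y.Nontrivial) (h : LstarT Y α β) :
    Set.range α = Set.range β :=
  le_antisymm (lstar_range_subset hY h) (lstar_range_subset hY (lstar_symm_s18 h))

/-- kernel on Y is preserved by R*. -/
lemma rstar_kerY (hne : Nonempty X) (h : RstarT Y α β) :
    ∀ u ∈ Y, ∀ v ∈ Y, (α u = α v ↔ β u = β v) := by
  intro u hu v hv
  have hiff := h.2.2 (fun _ => u) (fun _ => v) (const_inT1 hu) (const_inT1 hv)
  constructor
  · intro hc
    have : α ∘ (fun _ : X => u) = α ∘ (fun _ : X => v) := funext fun _ => hc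
    exact congrFun (hiff.mp this) (Classical.arbitrary X)
  · intro hc
    have : β ∘ (fun _ : X => u) = β ∘ (fun _ : X => v) := funext fun _ => hc
    exact congrFun (hiff.mpr this) (Classical.arbitrary X)

/-- deficiency transfers under R* (one direction). -/
lemma rstar_def_imp (h : RstarT Y α β)
    (dα : ∃ x, ∀ y ∈ Y, α y ≠ α x) : ∃ x, ∀ y ∈ Y, β y ≠ β x := by
  by_contra hd
  push_neg at hd
  choose δ hδY hδ using hd
  have hiff := h.2.2 δ id (Or.inl (by rintro s ⟨x, rfl⟩; exact hδY x)) (Or.inr rfl)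
  have hb : β ∘ δ = β ∘ id := funext fun x => hδ x
  have ha := hiff.mpr hb
  obtain ⟨x₀, hx₀⟩ := dα
  exact hx₀ (δ x₀) (hδY x₀) (congrFun ha x₀)

/-- comparison of |α(Y)| and |β(Y)| from kernel condition. -/
lemma mk_imageY_le (hk : ∀ u ∈ Y, ∀ v ∈ Y, β u = β v → α u = α v) :
    Cardinal.mk (α '' Y) ≤ Cardinal.mk (β '' Y) := by
  have hwd : ∀ t : α '' Y, ∃ y, y ∈ Y ∧ α y = ↑t := fun t => t.2
  choose w hwY hw using hwd
  refine Cardinal.mk_le_of_injective (f := fun t => ⟨β (w t), ⟨w t, hwY t, rfl⟩⟩) ?_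
  intro t t' htt'
  have : β (w t) = β (w t') := congrArg Subtype.val htt'
  have := hk _ (hwY t) _ (hwY t') this
  rw [hw t, hw t'] at this
  exact Subtype.ext this

lemma rank_decomp (α : X → X) (Y : Set X) :
    Cardinal.mk (Set.range α) = Cardinal.mk (α '' Y) + Cardinal.mk (Set.range α \ α '' Y : Set X) := by
  have hsub : α '' Y ⊆ Set.range α := Set.image_subset_range α Y
  have hu : α '' Y ∪ (Set.range α \ α '' Y) = Set.range α := Set.union_diff_cancel hsub
  rw [← Cardinal.mk_union_of_disjoint Set.disjoint_sdiff_right, hu]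

lemma def_one_le (dα : ∃ x, ∀ y ∈ Y, α y ≠ α x) :
    1 ≤ Cardinal.mk (Set.range α \ α '' Y : Set X) := by
  obtain ⟨x₀, hx₀⟩ := dα
  rw [Cardinal.one_le_iff_ne_zero, Cardinal.mk_ne_zero_iff]
  refine ⟨⟨α x₀, ⟨x₀, rfl⟩, ?_⟩⟩
  rintro ⟨y, hy, hyx⟩
  exact hx₀ y hy hyx

lemma ndef_range_eq (dα : ¬ ∃ x, ∀ y ∈ Y, α y ≠ α x) :
    Set.range α = α '' Y := by
  push_neg at dα
  apply le_antisymm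
  · rintro t ⟨x, rfl⟩
    obtain ⟨y, hy, hyx⟩ := dα x
    exact ⟨y, hy, hyx⟩
  · exact Set.image_subset_range α Y

lemma diff_le_compl (α : X → X) (Y : Set X) :
    Cardinal.mk (Set.range α \ α '' Y : Set X) ≤ Cardinal.mk (Set.univ \ Y : Set X) := by
  have hwd : ∀ t : (Set.range α \ α '' Y : Set X), ∃ x, α x = ↑t := fun t => t.2.1
  choose w hw using hwd
  have hwY : ∀ t, w t ∉ Y := by
    intro t hmem
    exact t.2.2 ⟨w t, hmem, hw t⟩
  refine Cardinal.mk_le_of_injective (f := fun t => ⟨w t, Set.mem_univ _, hwY t⟩) ?_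
  intro t t' htt'
  have : w t = w t' := congrArg Subtype.val htt'
  apply Subtype.ext
  rw [← hw t, ← hw t', this]

lemma imageY_one_le (hne : Y.Nonempty) : 1 ≤ Cardinal.mk (α '' Y) := by
  rw [Cardinal.one_le_iff_ne_zero, Cardinal.mk_ne_zero_iff]
  obtain ⟨y, hy⟩ := hne
  exact ⟨⟨α y, y, hy, rfl⟩⟩

/-- The key consequence of a single R* step. -/
lemma rstar_key (hY : Y.Nontrivial) (h : RstarT Y α β) :
    Cardinal.mk (Set.range α) = Cardinal.mk (Set.range β) ∨
    (∃ r k k' : Cardinal,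
      Cardinal.mk (Set.range α) = r + k ∧ Cardinal.mk (Set.range β) = r + k' ∧
      1 ≤ r ∧ 1 ≤ k ∧ 1 ≤ k' ∧
      k ≤ Cardinal.mk (Set.univ \ Y : Set X) ∧ k' ≤ Cardinal.mk (Set.univ \ Y : Set X)) := by
  have hne : Nonempty X := ⟨hY.nonempty.choose⟩
  have hker := rstar_kerY hne h
  have hrY : Cardinal.mk (α '' Y) = Cardinal.mk (β '' Y) :=
    le_antisymm (mk_imageY_le (fun u hu v hv hc => (hker u hu v hv).mpr hc))
      (mk_imageY_le (fun u hu v hv hc => (hker u hu v hv).mp hc))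
  by_cases dα : ∃ x, ∀ y ∈ Y, α y ≠ α x
  · have dβ := rstar_def_imp h dα
    refine Or.inr ⟨Cardinal.mk (α '' Y), Cardinal.mk (Set.range α \ α '' Y : Set X),
      Cardinal.mk (Set.range β \ β '' Y : Set X), rank_decomp α Y, ?_,
      imageY_one_le hY.nonempty, def_one_le dα, def_one_le dβ,
      diff_le_compl α Y, diff_le_compl β Y⟩
    rw [rank_decomp β Y, hrY]
  · have dβ : ¬ ∃ x, ∀ y ∈ Y, β y ≠ β x := fun hd => dα (rstar_def_imp (rstar_symm_s18 h) hd)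
    left
    rw [ndef_range_eq dα, ndef_range_eq dβ, hrY]
/-- equal rank implies D*-equivalent -/

lemma eqv_of_rank_eq (hα : Set.range α ⊆ Y) (hβ : Set.range β ⊆ Y)
    (h : Cardinal.mk (Set.range α) = Cardinal.mk (Set.range β)) :
    Relation.EqvGen (fun a b => LstarT Y a b ∨ RstarT Y a b) α β := by
  obtain ⟨e⟩ : Nonempty (Set.range β ≃ Set.range α) := Cardinal.eq.mp h.symm
  set β' : X → X := fun x => ↑(e ⟨β x, Set.mem_range_self x⟩) with hβ'
  have hrange : Set.range β' = Set.range α := by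
    apply Set.eq_of_subset_of_subset
    · rintro t ⟨x, rfl⟩; exact (e ⟨β x, Set.mem_range_self x⟩).2
    · rintro t ht
      obtain ⟨x₀, hx₀⟩ := (e.symm ⟨t, ht⟩).2
      refine ⟨x₀, ?_⟩
      have h1 : (⟨β x₀, Set.mem_range_self x₀⟩ : Set.range β) = e.symm ⟨t, ht⟩ := Subtype.ext hx₀
      show ↑(e ⟨β x₀, Set.mem_range_self x₀⟩) = t
      rw [h1, e.apply_symm_apply]
  have hker : ∀ x x', β x = β x' ↔ β' x = β' x' := by
    intro x x'
    constructor
    · intro hxx'; simp only [hβ', hxx']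
    · intro hxx'
      have : (⟨β x, Set.mem_range_self x⟩ : Set.range β) = ⟨β x', Set.mem_range_self x'⟩ :=
        e.injective (Subtype.ext hxx')
      exact congrArg Subtype.val this
  have hβ'Y : Set.range β' ⊆ Y := hrange ▸ hα
  exact Relation.EqvGen.trans _ β' _
    (Relation.EqvGen.rel _ _ (Or.inl (lstar_of_range_eq_s18 hα hβ'Y hrange.symm)))
    (Relation.EqvGen.rel _ _ (Or.inr (rstar_of_ker_s18 hβ'Y hβ (fun x x' => (hker x x').symm))))

lemma two_pt_range {a₀ c d : X} (hx : ∃ x, x ≠ a₀) (hcd : c ≠ d) :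
    Cardinal.mk (Set.range (fun x => if x = a₀ then c else d)) = 2 := by
  have : Set.range (fun x => if x = a₀ then c else d) = {c, d} := by
    apply Set.eq_of_subset_of_subset
    · rintro t ⟨x, rfl⟩; dsimp only; split
      · exact Set.mem_insert _ _
      · exact Set.mem_insert_of_mem _ rfl
    · rintro t (rfl | rfl)
      · exact ⟨a₀, if_pos rfl⟩
      · obtain ⟨x, hxx⟩ := hx
        exact ⟨x, if_neg hxx⟩
  rw [this, Cardinal.mk_insert (by simpa using hcd), Cardinal.mk_singleton]
  norm_num

/-- low rank: connect to the canonical rank-2 map -/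
lemma eqv_to_omg (hα : Set.range α ⊆ Y)
    {y₀ y₁ a₀ : X} (hy₀ : y₀ ∈ Y) (hy₁ : y₁ ∈ Y) (hy : y₀ ≠ y₁) (ha₀ : a₀ ∉ Y)
    (h2 : 2 ≤ Cardinal.mk (Set.range α))
    (hm : Cardinal.mk (Set.range α) ≤ Cardinal.mk (Set.univ \ Y : Set X)) :
    Relation.EqvGen (fun a b => LstarT Y a b ∨ RstarT Y a b) α
      (fun x => if x = a₀ then y₁ else y₀) := by
  obtain ⟨s₀, s₁, hs⟩ := Cardinal.two_le_iff.mp h2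
  set t₀ : X := ↑s₀ with ht₀
  have hst : (↑s₁ : X) ≠ t₀ := fun hc => hs.symm (Subtype.ext hc)
  obtain ⟨j⟩ : Nonempty ((Set.range α \ {t₀} : Set X) ↪ (Set.univ \ Y : Set X)) :=
    Cardinal.le_def _ _ |>.mp ((Cardinal.mk_le_mk_of_subset Set.diff_subset).trans hm)
  set α₁ : X → X := fun x =>
    if h : ∃ s : (Set.range α \ {t₀} : Set X), ↑(j s) = x then ↑(Classical.choose h) else t₀
    with hα₁
  have f1 : ∀ s : (Set.range α \ {t₀} : Set X), α₁ ↑(j s) = ↑s := by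
    intro s
    have hex : ∃ s' : (Set.range α \ {t₀} : Set X), (↑(j s') : X) = ↑(j s) := ⟨s, rfl⟩
    have : α₁ ↑(j s) = ↑(Classical.choose hex) := dif_pos hex
    rw [this]
    have hspec := Classical.choose_spec hex
    have : Classical.choose hex = s := j.injective (Subtype.ext hspec)
    rw [this]
  have f2 : ∀ x ∈ Y, α₁ x = t₀ := by
    intro x hx
    apply dif_neg
    rintro ⟨s, hsx⟩
    exact (j s).2.2 (hsx ▸ hx)
  have f3 : Set.range α₁ = Set.range α := by
    apply Set.eq_of_subset_of_subset
    · rintro t ⟨x, rfl⟩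
      by_cases h : ∃ s : (Set.range α \ {t₀} : Set X), (↑(j s) : X) = x
      · have : α₁ x = ↑(Classical.choose h) := dif_pos h
        rw [this]; exact (Classical.choose h).2.1
      · have : α₁ x = t₀ := dif_neg h
        rw [this, ht₀]; exact s₀.2
    · rintro t ht
      by_cases htt : t = t₀
      · exact ⟨y₀, by rw [f2 y₀ hy₀, htt]⟩
      · exact ⟨↑(j ⟨t, ht, htt⟩), f1 ⟨t, ht, htt⟩⟩
  have f4 : Set.range α₁ ⊆ Y := f3 ▸ hα
  have ht₀Y : t₀ ∈ Y := hα s₀.2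
  have ht₁Y : (↑s₁ : X) ∈ Y := hα s₁.2
  set ω' : X → X := fun x => if x = a₀ then ↑s₁ else t₀ with hω'
  have hω'Y : Set.range ω' ⊆ Y := by
    rintro t ⟨x, rfl⟩; simp only [hω']; split
    · exact ht₁Y
    · exact ht₀Y
  have step1 : Relation.EqvGen (fun a b => LstarT Y a b ∨ RstarT Y a b) α α₁ :=
    eqv_of_rank_eq hα f4 (by rw [f3])
  have step2 : RstarT Y α₁ ω' := by
    apply rstar_of_def f4 hω'Y
    · intro y hyY
      rw [f2 y hyY]
      simp only [hω']
      rw [if_neg (fun hc : y = a₀ => ha₀ (hc ▸ hyY))]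
    · refine ⟨↑(j ⟨↑s₁, s₁.2, hst⟩), fun y hyY => ?_⟩
      rw [f2 y hyY, f1 ⟨↑s₁, s₁.2, hst⟩]
      exact hst.symm
    · refine ⟨a₀, fun y hyY => ?_⟩
      simp only [hω', eq_self_iff_true, if_true]
      rw [if_neg (fun hc : y = a₀ => ha₀ (hc ▸ hyY))]
      exact hst.symm
  have step3 : Relation.EqvGen (fun a b => LstarT Y a b ∨ RstarT Y a b) ω'
      (fun x => if x = a₀ then y₁ else y₀) := by
    apply eqv_of_rank_eq hω'Y
    · rintro t ⟨x, rfl⟩; dsimp only; split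
      · exact hy₁
      · exact hy₀
    · rw [two_pt_range ⟨y₀, fun hc => ha₀ (by rw [← hc]; exact hy₀)⟩ hst,
        two_pt_range ⟨y₀, fun hc => ha₀ (by rw [← hc]; exact hy₀)⟩ (fun hc : y₁ = y₀ => hy hc.symm)]
  exact Relation.EqvGen.trans _ _ _ step1
    (Relation.EqvGen.trans _ _ _ (Relation.EqvGen.rel _ _ (Or.inr step2)) step3)

/-- connect any finite rank ≥ 2 to the canonical rank-2 map, when `|X \ Y| ≥ 2`. -/
lemma eqv_to_omg_fin {y₀ y₁ a₀ : X} (hy₀ : y₀ ∈ Y) (hy₁ : y₁ ∈ Y) (hy : y₀ ≠ y₁)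
    (ha₀ : a₀ ∉ Y) (hm2 : 2 ≤ Cardinal.mk (Set.univ \ Y : Set X)) :
    ∀ n : ℕ, 2 ≤ n → ∀ α : X → X, Set.range α ⊆ Y → Cardinal.mk (Set.range α) = n →
    Relation.EqvGen (fun a b => LstarT Y a b ∨ RstarT Y a b) α
      (fun x => if x = a₀ then y₁ else y₀) := by
  intro n hn2
  induction n, hn2 using Nat.le_induction with
  | base =>
    intro α hα hrank
    apply eqv_of_rank_eq hα
    · rintro t ⟨x, rfl⟩; dsimp only; split
      · exact hy₁
      · exact hy₀
    · rw [hrank, two_pt_range ⟨y₀, fun hc => ha₀ (by rw [← hc]; exact hy₀)⟩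
        (fun hc : y₁ = y₀ => hy hc.symm)]
      norm_num
  | succ n hn IH =>
    intro α hα hrank
    -- enumerate the range
    obtain ⟨e⟩ : Nonempty (Set.range α ≃ Fin (n+1)) := Cardinal.mk_eq_nat_iff.mp hrank
    set f : Fin (n+1) → X := fun i => ↑(e.symm i) with hf
    have finj : Function.Injective f := fun i i' hii' =>
      e.symm.injective (Subtype.ext hii')
    have hfmem : ∀ i, f i ∈ Set.range α := fun i => (e.symm i).2
    have hfY : ∀ i, f i ∈ Y := fun i => hα (hfmem i)
    -- two points outside Y
    obtain ⟨A, B, hAB⟩ := Cardinal.two_le_iff.mp hm2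
    have hab : (↑A : X) ≠ ↑B := fun hc => hAB (Subtype.ext hc)
    have haY : (↑A : X) ∉ Y := A.2.2
    have hbY : (↑B : X) ∉ Y := B.2.2
    have hn1 : n - 1 < n + 1 := by omega
    have hnn : n < n + 1 := by omega
    have h0 : 0 < n + 1 := by omega
    set i₁ : Fin (n+1) := ⟨n-1, hn1⟩ with hi₁
    set i₂ : Fin (n+1) := ⟨n, hnn⟩ with hi₂
    set E : X → X := fun x =>
      if h : ∃ i : Fin (n+1), (i : ℕ) < n-1 ∧ f i = x then x else f ⟨0, h0⟩ with hE
    set α₁ : X → X := fun x => if x = ↑A then f i₁ else if x = ↑B then f i₂ else E x with hα₁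
    set α₂ : X → X := fun x => if x = ↑A then f i₁ else if x = ↑B then f i₁ else E x with hα₂
    have hElow : ∀ x, ∃ i : Fin (n+1), (i : ℕ) < n - 1 ∧ E x = f i := by
      intro x
      by_cases h : ∃ i : Fin (n+1), (i : ℕ) < n-1 ∧ f i = x
      · obtain ⟨i, hi, hfi⟩ := h
        refine ⟨i, hi, ?_⟩
        simp only [hE]
        rw [dif_pos ⟨i, hi, hfi⟩]
        exact hfi.symm
      · refine ⟨⟨0, h0⟩, show (0:ℕ) < n - 1 by omega, ?_⟩
        simp only [hE]
        rw [dif_neg h]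
    have hEfix : ∀ i : Fin (n+1), (i : ℕ) < n - 1 → E (f i) = f i := by
      intro i hi
      simp only [hE]
      rw [dif_pos ⟨i, hi, rfl⟩]
    have hEY : ∀ x, E x ∈ Y := by
      intro x
      obtain ⟨i, _, hEx⟩ := hElow x
      rw [hEx]; exact hfY i
    have hEne1 : ∀ x, E x ≠ f i₁ := by
      intro x hc
      obtain ⟨i, hi, hEx⟩ := hElow x
      rw [hEx] at hc
      have h2 : (i : ℕ) = n - 1 := congrArg Fin.val (finj hc)
      omega
    have hEne2 : ∀ x, E x ≠ f i₂ := by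
      intro x hc
      obtain ⟨i, hi, hEx⟩ := hElow x
      rw [hEx] at hc
      have h2 : (i : ℕ) = n := congrArg Fin.val (finj hc)
      omega
    have hYne : ∀ y ∈ Y, y ≠ (↑A : X) ∧ y ≠ (↑B : X) := by
      intro y hyY
      exact ⟨fun hc => haY (hc ▸ hyY), fun hc => hbY (hc ▸ hyY)⟩
    have hα₁Y : ∀ x, α₁ x ∈ Y := by
      intro x
      simp only [hα₁]
      split
      · exact hfY i₁
      · split
        · exact hfY i₂
        · exact hEY x
    have hα₂Y : ∀ x, α₂ x ∈ Y := by
      intro x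
      simp only [hα₂]
      split
      · exact hfY i₁
      · split
        · exact hfY i₁
        · exact hEY x
    have honY : ∀ y ∈ Y, α₁ y = E y ∧ α₂ y = E y := by
      intro y hyY
      obtain ⟨hA, hB⟩ := hYne y hyY
      exact ⟨(if_neg hA).trans (if_neg hB), (if_neg hA).trans (if_neg hB)⟩
    have hα₁a : α₁ ↑A = f i₁ := if_pos rfl
    have hα₂a : α₂ ↑A = f i₁ := if_pos rfl
    have hα₁b : α₁ ↑B = f i₂ := (if_neg (Ne.symm hab)).trans (if_pos rfl)
    have hα₂b : α₂ ↑B = f i₁ := (if_neg (Ne.symm hab)).trans (if_pos rfl)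
    -- R* between α₁ and α₂
    have hstep : RstarT Y α₁ α₂ := by
      apply rstar_of_def (by rintro t ⟨x, rfl⟩; exact hα₁Y x)
        (by rintro t ⟨x, rfl⟩; exact hα₂Y x)
      · intro y hyY
        rw [(honY y hyY).1, (honY y hyY).2]
      · refine ⟨↑A, fun y hyY => ?_⟩
        rw [(honY y hyY).1, hα₁a]
        exact hEne1 y
      · refine ⟨↑A, fun y hyY => ?_⟩
        rw [(honY y hyY).2, hα₂a]
        exact hEne1 y
    -- range of α₁
    have hr1 : Set.range α₁ = Set.range f := by
      apply Set.eq_of_subset_of_subset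
      · rintro t ⟨x, rfl⟩
        simp only [hα₁]
        split
        · exact ⟨i₁, rfl⟩
        · split
          · exact ⟨i₂, rfl⟩
          · obtain ⟨i, _, hEx⟩ := hElow x
            exact ⟨i, hEx.symm⟩
      · rintro t ⟨i, rfl⟩
        rcases lt_or_ge (i : ℕ) (n-1) with hi | hi
        · refine ⟨f i, ?_⟩
          obtain ⟨hA, hB⟩ := hYne (f i) (hfY i)
          simp only [hα₁]
          rw [if_neg hA, if_neg hB]
          exact hEfix i hi
        · rcases Nat.lt_or_ge (i : ℕ) n with hi' | hi'
          · have hii : i = i₁ := Fin.ext (show (i : ℕ) = n - 1 by omega)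
            exact ⟨↑A, by rw [hα₁a, hii]⟩
          · have hii : i = i₂ := Fin.ext (show (i : ℕ) = n by omega)
            exact ⟨↑B, by rw [hα₁b, hii]⟩
    -- range of α₂
    set g : Fin n → X := fun i => f ⟨(i : ℕ), by omega⟩ with hg
    have hginj : Function.Injective g := by
      intro i i' h
      have h2 := congrArg Fin.val (finj h)
      exact Fin.ext h2
    have hr2 : Set.range α₂ = Set.range g := by
      apply Set.eq_of_subset_of_subset
      · rintro t ⟨x, rfl⟩
        simp only [hα₂]
        have hi₁g : f i₁ = g ⟨n-1, by omega⟩ := rfl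
        split
        · exact ⟨⟨n-1, by omega⟩, hi₁g.symm⟩
        · split
          · exact ⟨⟨n-1, by omega⟩, hi₁g.symm⟩
          · obtain ⟨i, hi, hEx⟩ := hElow x
            refine ⟨⟨(i : ℕ), by omega⟩, ?_⟩
            rw [hEx]
      · rintro t ⟨i, rfl⟩
        have hgi : g i = f ⟨(i : ℕ), by omega⟩ := rfl
        rcases lt_or_ge (i : ℕ) (n-1) with hi | hi
        · refine ⟨f ⟨(i : ℕ), by omega⟩, ?_⟩
          obtain ⟨hA, hB⟩ := hYne _ (hfY ⟨(i : ℕ), by omega⟩)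
          simp only [hα₂]
          rw [if_neg hA, if_neg hB, hgi]
          exact hEfix _ hi
        · have hii : (⟨(i : ℕ), by omega⟩ : Fin (n+1)) = i₁ :=
            Fin.ext (show (i : ℕ) = n - 1 by omega)
          refine ⟨↑A, ?_⟩
          rw [hα₂a, hgi, hii]
    have hrank1 : Cardinal.mk (Set.range α₁) = (n+1 : ℕ) := by
      rw [hr1]
      exact Cardinal.mk_eq_nat_iff.mpr ⟨(Equiv.ofInjective f finj).symm⟩
    have hrank2 : Cardinal.mk (Set.range α₂) = (n : ℕ) := by
      rw [hr2]
      exact Cardinal.mk_eq_nat_iff.mpr ⟨(Equiv.ofInjective g hginj).symm⟩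
    have hα₁r : Set.range α₁ ⊆ Y := by rintro t ⟨x, rfl⟩; exact hα₁Y x
    have hα₂r : Set.range α₂ ⊆ Y := by rintro t ⟨x, rfl⟩; exact hα₂Y x
    refine Relation.EqvGen.trans _ α₁ _ (eqv_of_rank_eq hα hα₁r (by rw [hrank, hrank1])) ?_
    refine Relation.EqvGen.trans _ α₂ _ (Relation.EqvGen.rel _ _ (Or.inr hstep)) ?_
    exact IH α₂ hα₂r hrank2

/-- the pure-cardinal right-hand-side pattern. -/
def Pcard (m ra rb : Cardinal) : Prop :=
  (m = 1 ∧ ra = rb) ∨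
    (2 ≤ m ∧ m < Cardinal.aleph0 ∧
      ((1 < ra ∧ ra < Cardinal.aleph0 ∧ 1 < rb ∧ rb < Cardinal.aleph0) ∨ ra = rb)) ∨
    (Cardinal.aleph0 ≤ m ∧ ((1 < ra ∧ ra ≤ m ∧ 1 < rb ∧ rb ≤ m) ∨ ra = rb))

lemma Pcard_of_eq {m ra rb : Cardinal} (hm1 : 1 ≤ m) (h : ra = rb) : Pcard m ra rb := by
  by_cases hm : m = 1
  · exact Or.inl ⟨hm, h⟩
  rcases lt_or_ge m Cardinal.aleph0 with hfin | hinf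
  · exact Or.inr (Or.inl ⟨Cardinal.two_le_iff_one_lt.mpr (hm1.lt_of_ne (Ne.symm hm)), hfin,
      Or.inr h⟩)
  · exact Or.inr (Or.inr ⟨hinf, Or.inr h⟩)

lemma Pcard_of_bounds {m ra rb r k k' : Cardinal} (hm1 : 1 ≤ m)
    (hra : ra = r + k) (hrb : rb = r + k')
    (h1r : 1 ≤ r) (h1k : 1 ≤ k) (h1k' : 1 ≤ k') (hkm : k ≤ m) (hk'm : k' ≤ m) :
    Pcard m ra rb := by
  have h1ra : 1 < ra := by
    rw [hra]
    calc (1 : Cardinal) < 2 := Cardinal.one_lt_two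
    _ = 1 + 1 := (one_add_one_eq_two).symm
    _ ≤ r + k := add_le_add h1r h1k
  have h1rb : 1 < rb := by
    rw [hrb]
    calc (1 : Cardinal) < 2 := Cardinal.one_lt_two
    _ = 1 + 1 := (one_add_one_eq_two).symm
    _ ≤ r + k' := add_le_add h1r h1k'
  by_cases hm : m = 1
  · subst hm
    have hk : k = 1 := le_antisymm hkm h1k
    have hk' : k' = 1 := le_antisymm hk'm h1k'
    exact Or.inl ⟨rfl, by rw [hra, hrb, hk, hk']⟩
  rcases lt_or_ge m Cardinal.aleph0 with hfin | hinf
  · refine Or.inr (Or.inl ⟨Cardinal.two_le_iff_one_lt.mpr (hm1.lt_of_ne (Ne.symm hm)), hfin, ?_⟩)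
    rcases lt_or_ge r Cardinal.aleph0 with hrfin | hrinf
    · exact Or.inl ⟨h1ra, by rw [hra]; exact Cardinal.add_lt_aleph0 hrfin (hkm.trans_lt hfin),
        h1rb, by rw [hrb]; exact Cardinal.add_lt_aleph0 hrfin (hk'm.trans_lt hfin)⟩
    · refine Or.inr ?_
      rw [hra, hrb, Cardinal.add_eq_left hrinf ((hkm.trans_lt hfin).le.trans hrinf),
        Cardinal.add_eq_left hrinf ((hk'm.trans_lt hfin).le.trans hrinf)]
  · refine Or.inr (Or.inr ⟨hinf, ?_⟩)
    rcases le_or_gt r m with hrm | hmr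
    · refine Or.inl ⟨h1ra, ?_, h1rb, ?_⟩
      · rw [hra]
        exact (add_le_add hrm hkm).trans (Cardinal.add_eq_self hinf).le
      · rw [hrb]
        exact (add_le_add hrm hk'm).trans (Cardinal.add_eq_self hinf).le
    · have hrinf : Cardinal.aleph0 ≤ r := hinf.trans hmr.le
      refine Or.inr ?_
      rw [hra, hrb, Cardinal.add_eq_left hrinf (hkm.trans hmr.le),
        Cardinal.add_eq_left hrinf (hk'm.trans hmr.le)]

lemma Pcard_symm {m ra rb : Cardinal} (h : Pcard m ra rb) : Pcard m rb ra := by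
  rcases h with ⟨hm, e⟩ | ⟨h2, hf, w | e⟩ | ⟨hi, w | e⟩
  · exact Or.inl ⟨hm, e.symm⟩
  · exact Or.inr (Or.inl ⟨h2, hf, Or.inl ⟨w.2.2.1, w.2.2.2, w.1, w.2.1⟩⟩)
  · exact Or.inr (Or.inl ⟨h2, hf, Or.inr e.symm⟩)
  · exact Or.inr (Or.inr ⟨hi, Or.inl ⟨w.2.2.1, w.2.2.2, w.1, w.2.1⟩⟩)
  · exact Or.inr (Or.inr ⟨hi, Or.inr e.symm⟩)

lemma Pcard_trans {m ra rb rc : Cardinal} (h1 : Pcard m ra rb) (h2 : Pcard m rb rc) :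
    Pcard m ra rc := by
  have c12 : ∀ {x : Cardinal}, x = 1 → 2 ≤ x → False := by
    rintro x rfl h; norm_num at h
  have c13 : ∀ {x : Cardinal}, x = 1 → Cardinal.aleph0 ≤ x → False := by
    rintro x rfl h; exact (Cardinal.one_lt_aleph0.not_ge) h
  rcases h1 with ⟨hm, e1⟩ | ⟨hm2, hmf, h1'⟩ | ⟨hmi, h1'⟩ <;>
    rcases h2 with ⟨hm', e2⟩ | ⟨hm2', hmf', h2'⟩ | ⟨hmi', h2'⟩
  · exact Or.inl ⟨hm, e1.trans e2⟩
  · exact absurd hm2' (fun h => c12 hm h)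
  · exact absurd hmi' (fun h => c13 hm h)
  · exact absurd hm2 (fun h => c12 hm' h)
  · refine Or.inr (Or.inl ⟨hm2, hmf, ?_⟩)
    rcases h1' with w1 | e1 <;> rcases h2' with w2 | e2
    · exact Or.inl ⟨w1.1, w1.2.1, w2.2.2.1, w2.2.2.2⟩
    · exact Or.inl ⟨w1.1, w1.2.1, e2 ▸ w1.2.2.1, e2 ▸ w1.2.2.2⟩
    · exact Or.inl ⟨e1 ▸ w2.1, e1 ▸ w2.2.1, w2.2.2.1, w2.2.2.2⟩
    · exact Or.inr (e1.trans e2)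
  · exact absurd hmi' (fun h => absurd hmf h.not_gt)
  · exact absurd hmi (fun h => c13 hm' h)
  · exact absurd hmf' (fun h => absurd h hmi.not_gt)
  · refine Or.inr (Or.inr ⟨hmi, ?_⟩)
    rcases h1' with w1 | e1 <;> rcases h2' with w2 | e2
    · exact Or.inl ⟨w1.1, w1.2.1, w2.2.2.1, w2.2.2.2⟩
    · exact Or.inl ⟨w1.1, w1.2.1, e2 ▸ w1.2.2.1, e2 ▸ w1.2.2.2⟩
    · exact Or.inl ⟨e1 ▸ w2.1, e1 ▸ w2.2.1, w2.2.2.1, w2.2.2.2⟩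
    · exact Or.inr (e1.trans e2)

/-- a single `L*` or `R*` step implies the cardinal relation. -/
lemma step_Pcard (hY : Y.Nontrivial) (hYX : Y ≠ Set.univ)
    (h : LstarT Y α β ∨ RstarT Y α β) :
    Pcard (Cardinal.mk (Set.univ \ Y : Set X)) (Cardinal.mk (Set.range α))
      (Cardinal.mk (Set.range β)) := by
  have hm1 : 1 ≤ Cardinal.mk (Set.univ \ Y : Set X) := by
    rw [Cardinal.one_le_iff_ne_zero, Cardinal.mk_ne_zero_iff]
    obtain ⟨x, hx⟩ := Set.ne_univ_iff_exists_notMem Y |>.mp hYX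
    exact ⟨⟨x, Set.mem_univ x, hx⟩⟩
  rcases h with h | h
  · exact Pcard_of_eq hm1 (by rw [lstar_range_eq hY h])
  · rcases rstar_key hY h with heq | ⟨r, k, k', hra, hrb, h1r, h1k, h1k', hkm, hk'm⟩
    · exact Pcard_of_eq hm1 heq
    · exact Pcard_of_bounds hm1 hra hrb h1r h1k h1k' hkm hk'm

end Aux
/-- Let `X` be a set and `Y` a proper subset of `X` with at least two
elements, and let `𝓓*` be the join of `𝓛*` and `𝓡*` (the equivalence closure of their
union). For `α, β ∈ T(X,Y)`, `α 𝓓* β` iff: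
(I) `|X \ Y| = 1` and `|α(X)| = |β(X)|`; or
(II) `2 ≤ |X \ Y| < ℵ₀` and (both ranks lie strictly between `1` and `ℵ₀`, or
`|α(X)| = |β(X)|`); or
(III) `|X \ Y|` is infinite and (both ranks lie in `(1, |X \ Y|]`, or
`|α(X)| = |β(X)|`). -/
theorem Dstar_in_TXY {X : Type*} (Y : Set X) (hY : Y.Nontrivial)
    (hYX : Y ≠ Set.univ) (α β : X → X)
    (hα : Set.range α ⊆ Y) (hβ : Set.range β ⊆ Y) :
    Relation.EqvGen (fun a b => LstarT Y a b ∨ RstarT Y a b) α β ↔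
    ((Cardinal.mk ↥(Set.univ \ Y) = 1 ∧
        Cardinal.mk (Set.range α) = Cardinal.mk (Set.range β)) ∨
      (2 ≤ Cardinal.mk ↥(Set.univ \ Y) ∧
        Cardinal.mk ↥(Set.univ \ Y) < Cardinal.aleph0 ∧
        ((1 < Cardinal.mk (Set.range α) ∧
            Cardinal.mk (Set.range α) < Cardinal.aleph0 ∧
            1 < Cardinal.mk (Set.range β) ∧
            Cardinal.mk (Set.range β) < Cardinal.aleph0) ∨
          Cardinal.mk (Set.range α) = Cardinal.mk (Set.range β))) ∨
      (Cardinal.aleph0 ≤ Cardinal.mk ↥(Set.univ \ Y) ∧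
        ((1 < Cardinal.mk (Set.range α) ∧
            Cardinal.mk (Set.range α) ≤ Cardinal.mk ↥(Set.univ \ Y) ∧
            1 < Cardinal.mk (Set.range β) ∧
            Cardinal.mk (Set.range β) ≤ Cardinal.mk ↥(Set.univ \ Y)) ∨
          Cardinal.mk (Set.range α) = Cardinal.mk (Set.range β)))) := by
  
  obtain ⟨y₀, hy₀, y₁, hy₁, hyne⟩ := hY
  obtain ⟨a₀, ha₀⟩ := Set.ne_univ_iff_exists_notMem Y |>.mp hYX
  have hYnt : Y.Nontrivial := ⟨y₀, hy₀, y₁, hy₁, hyne⟩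
  have hm1 : 1 ≤ Cardinal.mk (Set.univ \ Y : Set X) := by
    rw [Cardinal.one_le_iff_ne_zero, Cardinal.mk_ne_zero_iff]
    exact ⟨⟨a₀, Set.mem_univ a₀, ha₀⟩⟩
  show _ ↔ Pcard (Cardinal.mk (Set.univ \ Y : Set X)) (Cardinal.mk (Set.range α))
    (Cardinal.mk (Set.range β))
  constructor
  · intro hchain
    have key : ∀ a b : X → X,
        Relation.EqvGen (fun a b => LstarT Y a b ∨ RstarT Y a b) a b →
        a = b ∨ Pcard (Cardinal.mk (Set.univ \ Y : Set X)) (Cardinal.mk (Set.range a))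
          (Cardinal.mk (Set.range b)) := by
      intro a b hab
      induction hab with
      | rel x y h => exact Or.inr (step_Pcard hYnt hYX h)
      | refl x => exact Or.inl rfl
      | symm x y h ih =>
        rcases ih with rfl | hp
        · exact Or.inl rfl
        · exact Or.inr (Pcard_symm hp)
      | trans x y z h1 h2 ih1 ih2 =>
        rcases ih1 with rfl | hp1
        · exact ih2
        · rcases ih2 with rfl | hp2
          · exact Or.inr hp1
          · exact Or.inr (Pcard_trans hp1 hp2)
    rcases key α β hchain with rfl | hp
    · exact Pcard_of_eq hm1 rfl
    · exact hp
  · intro hp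
    rcases hp with ⟨hm, heq⟩ | ⟨hm2, hmf, w | heq⟩ | ⟨hmi, w | heq⟩
    · exact eqv_of_rank_eq hα hβ heq
    · obtain ⟨h1a, haf, h1b, hbf⟩ := w
      obtain ⟨na, hna⟩ := Cardinal.lt_aleph0.mp haf
      obtain ⟨nb, hnb⟩ := Cardinal.lt_aleph0.mp hbf
      have hna2 : 2 ≤ na := by
        have h2 : (2 : Cardinal) ≤ (na : Cardinal) :=
          Cardinal.two_le_iff_one_lt.mpr (hna ▸ h1a)
        exact_mod_cast h2
      have hnb2 : 2 ≤ nb := by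
        have h2 : (2 : Cardinal) ≤ (nb : Cardinal) :=
          Cardinal.two_le_iff_one_lt.mpr (hnb ▸ h1b)
        exact_mod_cast h2
      exact Relation.EqvGen.trans _ _ _
        (eqv_to_omg_fin hy₀ hy₁ hyne ha₀ hm2 na hna2 α hα hna)
        (Relation.EqvGen.symm _ _ (eqv_to_omg_fin hy₀ hy₁ hyne ha₀ hm2 nb hnb2 β hβ hnb))
    · exact eqv_of_rank_eq hα hβ heq
    · obtain ⟨h1a, ham, h1b, hbm⟩ := w
      exact Relation.EqvGen.trans _ _ _
        (eqv_to_omg hα hy₀ hy₁ hyne ha₀ (Cardinal.two_le_iff_one_lt.mpr h1a) ham)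
        (Relation.EqvGen.symm _ _
          (eqv_to_omg hβ hy₀ hy₁ hyne ha₀ (Cardinal.two_le_iff_one_lt.mpr h1b) hbm))
    · exact eqv_of_rank_eq hα hβ heq
end

section
/- Let X be a set and Y a proper subset of X with at least two elements. Let 𝓓̃ denote the smallest equivalence relation on T(X,Y) containing both 𝓛̃ and 𝓡̃ (their join). Then 𝓓̃ has exactly two classes: the set of constant maps (elements α with |α(X)| = 1) and its complement. That is, for α, β ∈ T(X,Y), α 𝓓̃ β if and only if (|α(X)| = 1 and |β(X)| = 1) or (|α(X)| > 1 and |β(X)| > 1). -/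
/-- The relation `𝓛̃` on `T(X,Y)`, with membership in `T(X,Y)` built in
(multiplication `α·β := β ∘ α`, so `α·η = η ∘ α`). -/
def LtildeT {X : Type*} (Y : Set X) (α β : X → X) : Prop :=
  Set.range α ⊆ Y ∧ Set.range β ⊆ Y ∧
    ∀ η : X → X, Set.range η ⊆ Y → η ∘ η = η → ((η ∘ α = α) ↔ (η ∘ β = β))

/-- The relation `𝓡̃` on `T(X,Y)`, with membership in `T(X,Y)` built in
(`η·α = α ∘ η`). -/
def RtildeT {X : Type*} (Y : Set X) (α β : X → X) : Prop :=
  Set.range α ⊆ Y ∧ Set.range β ⊆ Y ∧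
    ∀ η : X → X, Set.range η ⊆ Y → η ∘ η = η → ((α ∘ η = α) ↔ (β ∘ η = β))

section Aux

variable {X : Type*} {Y : Set X}

/-- A single 𝓛̃ or 𝓡̃ step preserves being a constant map. -/
lemma step_const (hY : Y.Nontrivial) {α β : X → X}
    (h : LtildeT Y α β ∨ RtildeT Y α β) :
    (∀ x y, α x = α y) ↔ (∀ x y, β x = β y) := by
  obtain ⟨y₀, hy₀, -⟩ := hY
  rcases h with ⟨hα, hβ, hL⟩ | ⟨hα, hβ, hR⟩
  · constructor
    · intro hc
      have hcY : α y₀ ∈ Y := hα ⟨y₀, rfl⟩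
      have hidem : (fun _ : X => α y₀) ∘ (fun _ : X => α y₀) = fun _ : X => α y₀ := rfl
      have hrange : Set.range (fun _ : X => α y₀) ⊆ Y := by
        rintro _ ⟨x, rfl⟩; exact hcY
      have h1 : (fun _ : X => α y₀) ∘ α = α := by
        funext x; exact hc y₀ x
      have h2 := (hL _ hrange hidem).mp h1
      intro x y
      have hx := congrFun h2 x
      have hy := congrFun h2 y
      simp only [Function.comp_apply] at hx hy
      rw [← hx, ← hy]
    · intro hc
      have hcY : β y₀ ∈ Y := hβ ⟨y₀, rfl⟩
      have hidem : (fun _ : X => β y₀) ∘ (fun _ : X => β y₀) = fun _ : X => β y₀ := rfl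
      have hrange : Set.range (fun _ : X => β y₀) ⊆ Y := by
        rintro _ ⟨x, rfl⟩; exact hcY
      have h1 : (fun _ : X => β y₀) ∘ β = β := by
        funext x; exact hc y₀ x
      have h2 := (hL _ hrange hidem).mpr h1
      intro x y
      have hx := congrFun h2 x
      have hy := congrFun h2 y
      simp only [Function.comp_apply] at hx hy
      rw [← hx, ← hy]
  · have hidem : (fun _ : X => y₀) ∘ (fun _ : X => y₀) = fun _ : X => y₀ := rfl
    have hrange : Set.range (fun _ : X => y₀) ⊆ Y := by
      rintro _ ⟨x, rfl⟩; exact hy₀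
    constructor
    · intro hc
      have h1 : α ∘ (fun _ : X => y₀) = α := by
        funext x; exact hc y₀ x
      have h2 := (hR _ hrange hidem).mp h1
      intro x y
      have hx := congrFun h2 x
      have hy := congrFun h2 y
      simp only [Function.comp_apply] at hx hy
      rw [← hx, ← hy]
    · intro hc
      have h1 : β ∘ (fun _ : X => y₀) = β := by
        funext x; exact hc y₀ x
      have h2 := (hR _ hrange hidem).mpr h1
      intro x y
      have hx := congrFun h2 x
      have hy := congrFun h2 y
      simp only [Function.comp_apply] at hx hy
      rw [← hx, ← hy]

/-- Maps with equal range (contained in `Y`) are 𝓛̃-related. -/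
lemma Ltilde_of_range_eq {α β : X → X} (hα : Set.range α ⊆ Y)
    (hβ : Set.range β ⊆ Y) (h : Set.range α = Set.range β) : LtildeT Y α β := by
  refine ⟨hα, hβ, fun η hη hidem => ?_⟩
  have key : ∀ γ : X → X, (η ∘ γ = γ) ↔ ∀ z ∈ Set.range γ, η z = z := by
    intro γ
    constructor
    · rintro hh _ ⟨x, rfl⟩; exact congrFun hh x
    · intro hh; funext x; exact hh (γ x) ⟨x, rfl⟩
  rw [key α, key β, h]

/-- If the value of `γ` at some `x₀ ∉ Y` is attained only at `x₀`, then no idempotent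
of `T(X,Y)` is a right identity for `γ` (w.r.t. `∘` acting on the right). -/
lemma no_right_id {γ : X → X} {x₀ : X} (hx₀ : x₀ ∉ Y)
    (huniq : ∀ x, γ x = γ x₀ → x = x₀) :
    ∀ η : X → X, Set.range η ⊆ Y → η ∘ η = η → γ ∘ η ≠ γ := by
  intro η hη _ hcon
  have h1 : γ (η x₀) = γ x₀ := congrFun hcon x₀
  have h2 := huniq _ h1
  exact hx₀ (h2 ▸ hη ⟨x₀, rfl⟩)

/-- Two maps (into `Y`) admitting no idempotent right identity are 𝓡̃-related. -/
lemma Rtilde_of_no_right_id {α β : X → X} (hα : Set.range α ⊆ Y)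
    (hβ : Set.range β ⊆ Y)
    (ha : ∀ η : X → X, Set.range η ⊆ Y → η ∘ η = η → α ∘ η ≠ α)
    (hb : ∀ η : X → X, Set.range η ⊆ Y → η ∘ η = η → β ∘ η ≠ β) :
    RtildeT Y α β :=
  ⟨hα, hβ, fun η hη hidem =>
    ⟨fun h => absurd h (ha η hη hidem), fun h => absurd h (hb η hη hidem)⟩⟩

open Classical in
/-- Any nonconstant `α ∈ T(X,Y)` is `EqvGen`-related to the canonical map `μ`. -/
lemma chain_to_mu {a b x₀ : X} (ha : a ∈ Y) (hb : b ∈ Y) (hab : a ≠ b)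
    (hx₀ : x₀ ∉ Y) {α : X → X} (hα : Set.range α ⊆ Y)
    (hnc : ¬ ∀ x y, α x = α y) :
    Relation.EqvGen (fun a b => LtildeT Y a b ∨ RtildeT Y a b) α
      (fun x => if x = x₀ then a else b) := by
  classical
  push_neg at hnc
  obtain ⟨p, q, hpq⟩ := hnc
  -- a value of α different from α x₀
  obtain ⟨v, hv, hvu⟩ : ∃ v ∈ Set.range α, v ≠ α x₀ := by
    by_cases hp : α p = α x₀
    · exact ⟨α q, ⟨q, rfl⟩, fun h => hpq (hp.trans h.symm)⟩
    · exact ⟨α p, ⟨p, rfl⟩, hp⟩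
  set u := α x₀ with hu
  set γ : X → X := fun x => if x = x₀ then u else (if α x = u then v else α x) with hγ
  have hγx₀ : γ x₀ = u := by simp [hγ]
  have hγne : ∀ x, x ≠ x₀ → γ x ≠ u := by
    intro x hx
    simp only [hγ, if_neg hx]
    by_cases h : α x = u
    · simp only [if_pos h]
      exact hvu
    · simp only [if_neg h]
      exact h
  have huniqγ : ∀ x, γ x = γ x₀ → x = x₀ := by
    intro x hxe
    by_contra hx
    exact hγne x hx (hxe.trans hγx₀)
  have hrangeγ : Set.range γ = Set.range α := by
    apply Set.Subset.antisymm
    · rintro _ ⟨x, rfl⟩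
      by_cases h : x = x₀
      · exact h ▸ (hγx₀ ▸ ⟨x₀, rfl⟩)
      · simp only [hγ, if_neg h]
        by_cases h2 : α x = u
        · simp [h2]; exact hv
        · simp [h2]
    · rintro _ ⟨x, rfl⟩
      by_cases h : α x = u
      · exact ⟨x₀, hγx₀.trans h.symm⟩
      · have hx : x ≠ x₀ := fun he => h (he ▸ rfl)
        exact ⟨x, by simp [hγ, if_neg hx, if_neg h]⟩
  have hγY : Set.range γ ⊆ Y := hrangeγ ▸ hα
  set μ : X → X := fun x => if x = x₀ then a else b with hμ
  have hμY : Set.range μ ⊆ Y := by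
    rintro _ ⟨x, rfl⟩
    by_cases h : x = x₀ <;> simp [hμ, h, ha, hb]
  have huniqμ : ∀ x, μ x = μ x₀ → x = x₀ := by
    intro x hxe
    by_contra hx
    have h1 : μ x = b := by simp [hμ, hx]
    have h2 : μ x₀ = a := by simp [hμ]
    exact hab (h2 ▸ h1 ▸ hxe).symm
  have step1 : LtildeT Y α γ := Ltilde_of_range_eq hα hγY hrangeγ.symm
  have step2 : RtildeT Y γ μ :=
    Rtilde_of_no_right_id hγY hμY (no_right_id hx₀ huniqγ) (no_right_id hx₀ huniqμ)
  exact Relation.EqvGen.trans _ _ _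
    (Relation.EqvGen.rel _ _ (Or.inl step1))
    (Relation.EqvGen.rel _ _ (Or.inr step2))

/-- `EqvGen` of `𝓛̃ ∪ 𝓡̃` preserves being a constant map. -/
lemma eqvgen_const (hY : Y.Nontrivial) {α β : X → X}
    (h : Relation.EqvGen (fun a b => LtildeT Y a b ∨ RtildeT Y a b) α β) :
    (∀ x y, α x = α y) ↔ (∀ x y, β x = β y) := by
  induction h with
  | rel _ _ hr => exact step_const hY hr
  | refl _ => rfl
  | symm _ _ _ ih => exact ih.symm
  | trans _ _ _ _ _ ih1 ih2 => exact ih1.trans ih2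

/-- Cardinality of the range is `1` iff the map is constant (when `X` is nonempty). -/
lemma card_range_eq_one_iff {α : X → X} (x : X) :
    Cardinal.mk (Set.range α) = 1 ↔ ∀ x y, α x = α y := by
  rw [Cardinal.eq_one_iff_unique]
  constructor
  · rintro ⟨hs, -⟩ x y
    have := Set.subsingleton_coe (Set.range α) |>.mpr
    have hss : (Set.range α).Subsingleton := (Set.subsingleton_coe _).mp hs
    exact hss ⟨x, rfl⟩ ⟨y, rfl⟩
  · intro hc
    refine ⟨(Set.subsingleton_coe _).mpr ?_, ⟨α x, ⟨x, rfl⟩⟩⟩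
    rintro _ ⟨p, rfl⟩ _ ⟨q, rfl⟩
    exact hc p q

lemma card_range_gt_one_iff {α : X → X} (x : X) :
    1 < Cardinal.mk (Set.range α) ↔ ¬ ∀ x y, α x = α y := by
  have h1 : (1 : Cardinal) ≤ Cardinal.mk (Set.range α) :=
    Cardinal.one_le_iff_ne_zero.mpr (Cardinal.mk_ne_zero_iff.mpr ⟨⟨α x, ⟨x, rfl⟩⟩⟩)
  rw [← card_range_eq_one_iff x]
  constructor
  · intro h hc; exact (ne_of_gt h) hc
  · intro h; exact lt_of_le_of_ne h1 (Ne.symm h)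

end Aux

/-- Let `X` be a set and `Y` a proper subset of `X` with at least two
elements, and let `𝓓̃` be the join of `𝓛̃` and `𝓡̃` (the equivalence closure of their
union). Then `𝓓̃` has exactly two classes: the constant maps (`|α(X)| = 1`) and their
complement. -/
theorem Dtilde_in_TXY {X : Type*} (Y : Set X) (hY : Y.Nontrivial)
    (hYX : Y ≠ Set.univ) (α β : X → X)
    (hα : Set.range α ⊆ Y) (hβ : Set.range β ⊆ Y) :
    Relation.EqvGen (fun a b => LtildeT Y a b ∨ RtildeT Y a b) α β ↔
    ((Cardinal.mk (Set.range α) = 1 ∧ Cardinal.mk (Set.range β) = 1) ∨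
      (1 < Cardinal.mk (Set.range α) ∧ 1 < Cardinal.mk (Set.range β))) := by
  obtain ⟨a, haY, b, hbY, hab⟩ := hY
  obtain ⟨x₀, hx₀⟩ : ∃ x₀, x₀ ∉ Y := by
    by_contra h
    push_neg at h
    exact hYX (Set.eq_univ_of_forall h)
  have hYnt : Y.Nontrivial := ⟨a, haY, b, hbY, hab⟩
  constructor
  · intro h
    have key : (∀ x y, α x = α y) ↔ (∀ x y, β x = β y) := eqvgen_const hYnt h
    by_cases hc : ∀ x y, α x = α y
    · exact Or.inl ⟨(card_range_eq_one_iff a).mpr hc,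
        (card_range_eq_one_iff a).mpr (key.mp hc)⟩
    · exact Or.inr ⟨(card_range_gt_one_iff a).mpr hc,
        (card_range_gt_one_iff a).mpr (fun hb2 => hc (key.mpr hb2))⟩
  · rintro (⟨h1, h2⟩ | ⟨h1, h2⟩)
    · -- both constant: directly 𝓡̃-related
      have hc1 := (card_range_eq_one_iff a).mp h1
      have hc2 := (card_range_eq_one_iff a).mp h2
      refine Relation.EqvGen.rel _ _ (Or.inr ⟨hα, hβ, fun η hη hidem => ?_⟩)
      constructor
      · intro _; funext x; exact hc2 (η x) x
      · intro _; funext x; exact hc1 (η x) x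
    · -- both nonconstant: chain through μ
      have hnc1 := (card_range_gt_one_iff a).mp h1
      have hnc2 := (card_range_gt_one_iff a).mp h2
      exact Relation.EqvGen.trans _ _ _
        (chain_to_mu haY hbY hab hx₀ hα hnc1)
        (Relation.EqvGen.symm _ _ (chain_to_mu haY hbY hab hx₀ hβ hnc2))
end
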